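/- Let P be a double histogram, let k ≥ 1, and let s be a vertex of P. If I(bd^{k−1}(s)) ≠ V(P), then d(s, bd^k(s)) = k. If I(td^{k−1}(s)) ≠ V(P), then d(s, td^k(s)) = k. -/

import Mathlib

open Classical Set

noncomputable section

/-- A *double histogram*: an `x`-monotone orthogonal polygon in general position whose
base line lies on the `x`-axis.  It is described by its bottom columns (over the
breakpoints `xs` with depths `d < 0`) and its top columns (over the breakpoints `ys`
with heights `h > 0`).  A *simple histogram* is the special case `n = 1`, where the
upper boundary is the single (base) edge at height `h 0`. -/
structure DoubleHistogram where
  m : ℕ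
  n : ℕ
  hm : 0 < m
  hn : 0 < n
  xs : Fin (m + 1) → ℝ
  ys : Fin (n + 1) → ℝ
  d : Fin m → ℝ
  h : Fin n → ℝ
  xs_mono : StrictMono xs
  ys_mono : StrictMono ys
  left_eq : ys 0 = xs 0
  right_eq : ys (Fin.last n) = xs (Fin.last m)
  d_neg : ∀ i, d i < 0
  h_pos : ∀ j, 0 < h j
  /-- general position: no three vertices on a horizontal line -/
  d_inj : Function.Injective d
  h_inj : Function.Injective h
  /-- general position: no three vertices on a vertical line -/
  gen_pos : ∀ (i : Fin (m + 1)) (j : Fin (n + 1)), xs i = ys j →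
      (i = 0 ∧ j = 0) ∨ (i = Fin.last m ∧ j = Fin.last n)

/-- Among the reals in `A`, the one of minimum absolute value
(i.e. "closest to the base line"). -/
def closestToBase (A : Set ℝ) : ℝ :=
  sSup {y | y ∈ A ∧ ∀ y' ∈ A, |y| ≤ |y'|}

/-- The leftmost point of `S` among those minimizing the distance `|y|` to the base line. -/
def leftmostLowest (S : Set (ℝ × ℝ)) : ℝ × ℝ :=
  (sInf {x | ∃ y, (x, y) ∈ S ∧ ∀ q ∈ S, |y| ≤ |q.2|},
    closestToBase {y | (sInf {x | ∃ y', (x, y') ∈ S ∧ ∀ q ∈ S, |y'| ≤ |q.2|}, y) ∈ S})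

namespace DoubleHistogram

variable (H : DoubleHistogram)

/-- The polygon `P`, as a closed region of the plane. -/
def region : Set (ℝ × ℝ) :=
  (⋃ i : Fin H.m, Icc (H.xs i.castSucc) (H.xs i.succ) ×ˢ Icc (H.d i) 0) ∪
    ⋃ j : Fin H.n, Icc (H.ys j.castSucc) (H.ys j.succ) ×ˢ Icc 0 (H.h j)

/-- The vertex set `V(P)`. -/
def verts : Set (ℝ × ℝ) :=
  (⋃ i : Fin H.m,
      ({(H.xs i.castSucc, H.d i), (H.xs i.succ, H.d i)} : Set (ℝ × ℝ))) ∪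
    ⋃ j : Fin H.n,
      ({(H.ys j.castSucc, H.h j), (H.ys j.succ, H.h j)} : Set (ℝ × ℝ))

/-- `p` and `q` are co-visible: the axis-parallel rectangle they span lies in `P`. -/
def covisible (p q : ℝ × ℝ) : Prop :=
  Icc (min p.1 q.1) (max p.1 q.1) ×ˢ Icc (min p.2 q.2) (max p.2 q.2) ⊆ H.region

lemma covisible_symm {p q : ℝ × ℝ} (hpq : H.covisible p q) : H.covisible q p := by
  unfold covisible at hpq ⊢
  rwa [min_comm q.1 p.1, max_comm q.1 p.1, min_comm q.2 p.2, max_comm q.2 p.2]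

/-- The (unweighted) visibility graph `G(P)` on the vertices of `P`. -/
def visGraph : SimpleGraph ↥H.verts where
  Adj u v := u ≠ v ∧ H.covisible ↑u ↑v
  symm := ⟨fun _ _ hu => ⟨hu.1.symm, H.covisible_symm hu.2⟩⟩
  loopless := ⟨fun _ hu => hu.1 rfl⟩

/-- The closed neighborhood `N(v)`: `v` together with the vertices it sees. -/
def Nbr (v : ℝ × ℝ) : Set (ℝ × ℝ) :=
  {w | w ∈ H.verts ∧ (w = v ∨ H.covisible v w)}

/-- The abscissa where the leftward horizontal ray from `v` hits the boundary of `P`. -/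
def lhit (v : ℝ × ℝ) : ℝ :=
  sInf {x | x ≤ v.1 ∧ Icc x v.1 ×ˢ ({v.2} : Set ℝ) ⊆ H.region}

/-- The abscissa where the rightward horizontal ray from `v` hits the boundary of `P`. -/
def rhit (v : ℝ × ℝ) : ℝ :=
  sSup {x | v.1 ≤ x ∧ Icc v.1 x ×ˢ ({v.2} : Set ℝ) ⊆ H.region}

/-- The `y`-coordinate, among the vertices of `P` with abscissa `x` lying on the same side
of the base line as `side`, of the one closest to the base line (i.e. the endpoint of the
vertical edge at `x` closer to the base line). -/
def nearY (x : ℝ) (side : ℝ) : ℝ :=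
  if side < 0 then sSup {y | y < 0 ∧ (x, y) ∈ H.verts}
  else sInf {y | 0 < y ∧ (x, y) ∈ H.verts}

/-- The left point `ℓ(v)` (double-histogram version): if the leftward ray from `v` hits the
left boundary then the hit point, otherwise the endpoint of the hit vertical edge closer to
the base line. -/
def lpt (v : ℝ × ℝ) : ℝ × ℝ :=
  if H.lhit v = H.xs 0 then (H.xs 0, v.2) else (H.lhit v, H.nearY (H.lhit v) v.2)

/-- The right point `r(v)` (double-histogram version). -/
def rpt (v : ℝ × ℝ) : ℝ × ℝ :=
  if H.rhit v = H.xs (Fin.last H.m) then (H.xs (Fin.last H.m), v.2)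
  else (H.rhit v, H.nearY (H.rhit v) v.2)

/-- The left base vertex (for a simple histogram, i.e. `n = 1`). -/
def baseL : ℝ × ℝ := (H.xs 0, H.h ⟨0, H.hn⟩)

/-- The right base vertex (for a simple histogram, i.e. `n = 1`). -/
def baseR : ℝ × ℝ := (H.xs (Fin.last H.m), H.h ⟨0, H.hn⟩)

/-- The left point `ℓ(v)` (simple-histogram version): if the leftward ray from `v` hits the
left boundary then the left base vertex, otherwise the endpoint of the hit vertical edge
closer to the base edge. -/
def lptS (v : ℝ × ℝ) : ℝ × ℝ :=
  if H.lhit v = H.xs 0 then H.baseL else (H.lhit v, H.nearY (H.lhit v) v.2)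

/-- The right point `r(v)` (simple-histogram version). -/
def rptS (v : ℝ × ℝ) : ℝ × ℝ :=
  if H.rhit v = H.xs (Fin.last H.m) then H.baseR
  else (H.rhit v, H.nearY (H.rhit v) v.2)

/-- The interval `[p, q]`: all vertices of `P` between `p` and `q`. -/
def ivl (p q : ℝ × ℝ) : Set (ℝ × ℝ) :=
  {u | u ∈ H.verts ∧ p.1 ≤ u.1 ∧ u.1 ≤ q.1}

/-- The interval `I(v) = [ℓ(v), r(v)]` of a vertex (double-histogram version). -/
def Iv (v : ℝ × ℝ) : Set (ℝ × ℝ) := H.ivl (H.lpt v) (H.rpt v)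

/-- The interval `I(v) = [ℓ(v), r(v)]` of a vertex (simple-histogram version). -/
def IvS (v : ℝ × ℝ) : Set (ℝ × ℝ) := H.ivl (H.lptS v) (H.rptS v)

/-- The corresponding vertex `cv(v)`: the unique other vertex sharing a horizontal edge
(equivalently, by general position, the `y`-coordinate) with `v`. -/
def cv (v : ℝ × ℝ) : ℝ × ℝ :=
  (sSup {x | (x, v.2) ∈ H.verts ∧ x ≠ v.1}, v.2)

/-- `v` is a left vertex: the left endpoint of its horizontal edge. -/
def IsLeftVert (v : ℝ × ℝ) : Prop :=
  (∃ i : Fin H.m, v = (H.xs i.castSucc, H.d i)) ∨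
    ∃ j : Fin H.n, v = (H.ys j.castSucc, H.h j)

/-- `v` is a right vertex: the right endpoint of its horizontal edge. -/
def IsRightVert (v : ℝ × ℝ) : Prop :=
  (∃ i : Fin H.m, v = (H.xs i.succ, H.d i)) ∨
    ∃ j : Fin H.n, v = (H.ys j.succ, H.h j)

/-- `v` is an `ℓ`-reflex vertex (a left vertex with interior angle `3π/2`). -/
def IsLReflex (v : ℝ × ℝ) : Prop :=
  (∃ i : Fin H.m, ∃ _ : 0 < (i : ℕ),
      v = (H.xs i.castSucc, H.d i) ∧
        H.d ⟨(i : ℕ) - 1, lt_of_le_of_lt (Nat.sub_le _ _) i.isLt⟩ < H.d i) ∨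
    ∃ j : Fin H.n, ∃ _ : 0 < (j : ℕ),
      v = (H.ys j.castSucc, H.h j) ∧
        H.h j < H.h ⟨(j : ℕ) - 1, lt_of_le_of_lt (Nat.sub_le _ _) j.isLt⟩

/-- `v` is an `r`-reflex vertex (a right vertex with interior angle `3π/2`). -/
def IsRReflex (v : ℝ × ℝ) : Prop :=
  (∃ i : Fin H.m, ∃ hi : (i : ℕ) + 1 < H.m,
      v = (H.xs i.succ, H.d i) ∧ H.d ⟨(i : ℕ) + 1, hi⟩ < H.d i) ∨
    ∃ j : Fin H.n, ∃ hj : (j : ℕ) + 1 < H.n,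
      v = (H.ys j.succ, H.h j) ∧ H.h j < H.h ⟨(j : ℕ) + 1, hj⟩

/-- `v` is a reflex vertex. -/
def IsReflex (v : ℝ × ℝ) : Prop := H.IsLReflex v ∨ H.IsRReflex v

/-- The near dominator `nd(s,t)`: for `t` strictly right of `s`, the rightmost vertex of
`N(s)` to the left of `t`, ties broken towards the base line (symmetric otherwise). -/
def nd (s t : ℝ × ℝ) : ℝ × ℝ :=
  if s.1 < t.1 then
    let nx := sSup {x | (∃ y, (x, y) ∈ H.Nbr s) ∧ x ≤ t.1}
    (nx, closestToBase {y | (nx, y) ∈ H.Nbr s})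
  else
    let nx := sInf {x | (∃ y, (x, y) ∈ H.Nbr s) ∧ t.1 ≤ x}
    (nx, closestToBase {y | (nx, y) ∈ H.Nbr s})

/-- The far dominator `fd(s,t)`: for `t` strictly right of `s`, the leftmost vertex of
`N(s)` to the right of `t`, ties broken towards the base line; if there is no such vertex,
the point `r(s)` (symmetric otherwise). -/
def fd (s t : ℝ × ℝ) : ℝ × ℝ :=
  if s.1 < t.1 then
    if ∃ w ∈ H.Nbr s, t.1 ≤ w.1 then
      let nx := sInf {x | (∃ y, (x, y) ∈ H.Nbr s) ∧ t.1 ≤ x}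
      (nx, closestToBase {y | (nx, y) ∈ H.Nbr s})
    else H.rpt s
  else
    if ∃ w ∈ H.Nbr s, w.1 ≤ t.1 then
      let nx := sSup {x | (∃ y, (x, y) ∈ H.Nbr s) ∧ x ≤ t.1}
      (nx, closestToBase {y | (nx, y) ∈ H.Nbr s})
    else H.lpt s

/-- The sequence `a^i(s)`: `a^0(s) = s`, and `a^i(s)` is the leftmost vertex of
`A^i(s) = {v ∈ N(s) : ℓ(v)_x < ℓ(a^{i-1}(s))_x}` (ties towards the base line),
or `a^{i-1}(s)` if `A^i(s)` is empty. -/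
def aSeq (s : ℝ × ℝ) : ℕ → ℝ × ℝ := fun k =>
  Nat.rec (motive := fun _ => ℝ × ℝ) s
    (fun _ prev =>
      let A : Set (ℝ × ℝ) := {v | v ∈ H.Nbr s ∧ (H.lpt v).1 < (H.lpt prev).1}
      if A = ∅ then prev
      else
        let ax := sInf {x | ∃ y, (x, y) ∈ A}
        (ax, closestToBase {y | (ax, y) ∈ A}))
    k

/-- The sequence `b^i(s)`: `b^0(s) = s`, and `b^i(s)` is the rightmost vertex of
`B^i(s) = {v ∈ N(s) : r(v)_x > r(b^{i-1}(s))_x}` (ties towards the base line),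
or `b^{i-1}(s)` if `B^i(s)` is empty. -/
def bSeq (s : ℝ × ℝ) : ℕ → ℝ × ℝ := fun k =>
  Nat.rec (motive := fun _ => ℝ × ℝ) s
    (fun _ prev =>
      let B : Set (ℝ × ℝ) := {v | v ∈ H.Nbr s ∧ (H.rpt prev).1 < (H.rpt v).1}
      if B = ∅ then prev
      else
        let bx := sSup {x | ∃ y, (x, y) ∈ B}
        (bx, closestToBase {y | (bx, y) ∈ B}))
    k

/-- The pair of the `k`-th bottom dominator `bd^k(s)` and `k`-th top dominator `td^k(s)`:
`bd^0(s) = td^0(s) = s`; for `k > 0`, with `I^k(s) = I(bd^{k-1}(s)) ∪ I(td^{k-1}(s))`,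
`bd^k(s)` is the leftmost vertex of `I^k(s)⁻` minimizing the distance to the base line,
and `td^k(s)` the leftmost vertex of `I^k(s)⁺` minimizing the distance to the base line;
if one of the two sets is empty, the corresponding dominator equals the other one. -/
def bdtd (s : ℝ × ℝ) : ℕ → (ℝ × ℝ) × (ℝ × ℝ) := fun k =>
  Nat.rec (motive := fun _ => (ℝ × ℝ) × (ℝ × ℝ)) (s, s)
    (fun _ p =>
      let J : Set (ℝ × ℝ) := H.Iv p.1 ∪ H.Iv p.2
      let Jm : Set (ℝ × ℝ) := {v | v ∈ J ∧ v.2 < 0}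
      let Jp : Set (ℝ × ℝ) := {v | v ∈ J ∧ 0 < v.2}
      if Jm = ∅ then (leftmostLowest Jp, leftmostLowest Jp)
      else if Jp = ∅ then (leftmostLowest Jm, leftmostLowest Jm)
      else (leftmostLowest Jm, leftmostLowest Jp))
    k

/-- The `k`-th interval `I^k(s)`: `I^0(s) = {s}` and
`I^{k+1}(s) = I(bd^k(s)) ∪ I(td^k(s))`. -/
def Ipow (s : ℝ × ℝ) : ℕ → Set (ℝ × ℝ) := fun k =>
  Nat.rec (motive := fun _ => Set (ℝ × ℝ)) {s}
    (fun k _ => H.Iv (H.bdtd s k).1 ∪ H.Iv (H.bdtd s k).2) k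

/-- `w` lies on a shortest path from `s` to `t` in the visibility graph. -/
def OnShortestPath (s t w : ↥H.verts) : Prop :=
  ∃ p : H.visGraph.Walk s t, p.length = H.visGraph.dist s t ∧ w ∈ p.support

end DoubleHistogram

/-- A routing scheme for a graph `G`: every vertex carries a binary label and a binary
routing table, and the routing function maps (link table of the current vertex, routing
table of the current vertex, label of the target, current header) to the next vertex
together with the new header. -/
structure RoutingScheme {V : Type} (G : SimpleGraph V) where
  lab : V → List Bool
  tab : V → List Bool
  route : Set (List Bool) → List Bool → List Bool → List Bool → V × List Bool

namespace RoutingScheme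

variable {V : Type} {G : SimpleGraph V} (R : RoutingScheme G)

/-- One routing step at vertex `p` with header `h`, towards the target `t`: the routing
function is applied to the link table of `p` (the labels of its closed neighborhood),
the routing table of `p`, the label of `t` and the header `h`. -/
def step (t p : V) (h : List Bool) : V × List Bool :=
  R.route (R.lab '' {w | w = p ∨ G.Adj p w}) (R.tab p) (R.lab t) h

/-- The routing sequence from `s` towards `t`, starting with the empty header. -/
def seq (s t : V) : ℕ → V × List Bool := fun k =>
  Nat.rec (motive := fun _ => V × List Bool) (s, ([] : List Bool))
    (fun _ q => R.step t q.1 q.2) k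

end RoutingScheme


section Aux

lemma abs_le_abs_neg {a b : ℝ} (ha : a < 0) (hb : b < 0) : |a| ≤ |b| ↔ b ≤ a := by
  rw [abs_of_neg ha, abs_of_neg hb]; constructor <;> intro <;> linarith

lemma abs_le_abs_pos {a b : ℝ} (ha : 0 < a) (hb : 0 < b) : |a| ≤ |b| ↔ a ≤ b := by
  rw [abs_of_pos ha, abs_of_pos hb]

lemma fin_locate {N : ℕ} (hN : 0 < N) (f : Fin (N + 1) → ℝ) (hf : StrictMono f) {t : ℝ}
    (h0 : f 0 ≤ t) (h1 : t ≤ f (Fin.last N)) :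
    ∃ i : Fin N, f i.castSucc ≤ t ∧ t ≤ f i.succ := by
  classical
  have hS : (Finset.univ.filter (fun j : Fin (N + 1) => f j ≤ t)).Nonempty :=
    ⟨0, by simp [h0]⟩
  set i := (Finset.univ.filter (fun j : Fin (N + 1) => f j ≤ t)).max' hS with hi
  have him : f i ≤ t := by
    have := (Finset.univ.filter (fun j : Fin (N + 1) => f j ≤ t)).max'_mem hS
    simpa using this
  by_cases hlast : (i : ℕ) = N
  · -- t = f (last N)
    have hteq : t = f (Fin.last N) := le_antisymm h1 (by
      have : i = Fin.last N := Fin.ext hlast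
      rw [← this]; exact him)
    refine ⟨⟨N - 1, by omega⟩, ?_, ?_⟩
    · have : (⟨N - 1, by omega⟩ : Fin N).castSucc ≤ Fin.last N := by
        simp [Fin.le_def, Fin.last]
      calc f _ ≤ f (Fin.last N) := hf.monotone this
        _ = t := hteq.symm
    · have : (⟨N - 1, by omega⟩ : Fin N).succ = Fin.last N := by
        apply Fin.ext; simp [Fin.last]; omega
      rw [this]; exact h1
  · have hiN : (i : ℕ) < N := by have := i.isLt; omega
    refine ⟨⟨i, hiN⟩, ?_, ?_⟩
    · have : (⟨(i : ℕ), hiN⟩ : Fin N).castSucc = i := by apply Fin.ext; simp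
      rw [this]; exact him
    · by_contra hc
      push_neg at hc
      have hmem : (⟨(i : ℕ), hiN⟩ : Fin N).succ ∈
          Finset.univ.filter (fun j : Fin (N + 1) => f j ≤ t) := by
        simp only [Finset.mem_filter, Finset.mem_univ, true_and]
        exact le_of_lt hc
      have := Finset.le_max' _ _ hmem
      rw [← hi] at this
      have : ((⟨(i : ℕ), hiN⟩ : Fin N).succ : ℕ) ≤ (i : ℕ) := this
      simp at this

lemma fin_endpoint {N : ℕ} (f : Fin (N + 1) → ℝ) (hf : StrictMono f) (i : Fin N)
    (π : Fin (N + 1)) {p q a : ℝ} (hπ1 : p ≤ f π) (hπ2 : f π ≤ q)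
    (ha1 : f i.castSucc ≤ a) (ha2 : a ≤ f i.succ) (hap : p ≤ a) (haq : a ≤ q) :
    ∃ e : Fin (N + 1), (e = i.castSucc ∨ e = i.succ) ∧ p ≤ f e ∧ f e ≤ q := by
  by_cases h1 : p ≤ f i.castSucc
  · exact ⟨i.castSucc, Or.inl rfl, h1, le_trans ha1 haq⟩
  · push_neg at h1
    by_cases h2 : f i.succ ≤ q
    · exact ⟨i.succ, Or.inr rfl, le_trans hap ha2, h2⟩
    · push_neg at h2
      exfalso
      have hl : i.castSucc < π := hf.lt_iff_lt.mp (lt_of_lt_of_le h1 hπ1)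
      have hr : π < i.succ := hf.lt_iff_lt.mp (lt_of_le_of_lt hπ2 h2)
      have := Fin.lt_iff_val_lt_val.mp hl
      have := Fin.lt_iff_val_lt_val.mp hr
      simp [Fin.lt_def] at hl hr
      omega

lemma interval_union {a1 b1 a2 b2 c t : ℝ} (h1 : a1 ≤ c) (h2 : c ≤ b1) (h3 : a2 ≤ c)
    (h4 : c ≤ b2) (h5 : min a1 a2 ≤ t) (h6 : t ≤ max b1 b2) :
    (a1 ≤ t ∧ t ≤ b1) ∨ (a2 ≤ t ∧ t ≤ b2) := by
  rcases le_total t c with h | h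
  · rcases le_total a1 a2 with h' | h'
    · left; constructor
      · calc a1 = min a1 a2 := (min_eq_left h').symm
          _ ≤ t := h5
      · linarith
    · right; constructor
      · calc a2 = min a1 a2 := (min_eq_right h').symm
          _ ≤ t := h5
      · linarith
  · rcases le_total b1 b2 with h' | h'
    · right; refine ⟨by linarith, ?_⟩
      calc t ≤ max b1 b2 := h6
        _ = b2 := max_eq_right h'
    · left; refine ⟨by linarith, ?_⟩
      calc t ≤ max b1 b2 := h6
        _ = b1 := max_eq_left h'

end Aux

namespace DoubleHistogram

variable (H : DoubleHistogram)

lemma mem_region_iff (p : ℝ × ℝ) : p ∈ H.region ↔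
    (∃ i : Fin H.m, (H.xs i.castSucc ≤ p.1 ∧ p.1 ≤ H.xs i.succ) ∧ H.d i ≤ p.2 ∧ p.2 ≤ 0) ∨
    (∃ j : Fin H.n, (H.ys j.castSucc ≤ p.1 ∧ p.1 ≤ H.ys j.succ) ∧ 0 ≤ p.2 ∧ p.2 ≤ H.h j) := by
  simp only [region, Set.mem_union, Set.mem_iUnion, Set.mem_prod, Set.mem_Icc]

lemma mem_verts_iff (p : ℝ × ℝ) : p ∈ H.verts ↔
    (∃ i : Fin H.m, p = (H.xs i.castSucc, H.d i) ∨ p = (H.xs i.succ, H.d i)) ∨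
    (∃ j : Fin H.n, p = (H.ys j.castSucc, H.h j) ∨ p = (H.ys j.succ, H.h j)) := by
  simp [verts]

lemma vert_bl (i : Fin H.m) : (H.xs i.castSucc, H.d i) ∈ H.verts :=
  (H.mem_verts_iff _).mpr (Or.inl ⟨i, Or.inl rfl⟩)

lemma vert_br (i : Fin H.m) : (H.xs i.succ, H.d i) ∈ H.verts :=
  (H.mem_verts_iff _).mpr (Or.inl ⟨i, Or.inr rfl⟩)

lemma vert_tl (j : Fin H.n) : (H.ys j.castSucc, H.h j) ∈ H.verts :=
  (H.mem_verts_iff _).mpr (Or.inr ⟨j, Or.inl rfl⟩)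

lemma vert_tr (j : Fin H.n) : (H.ys j.succ, H.h j) ∈ H.verts :=
  (H.mem_verts_iff _).mpr (Or.inr ⟨j, Or.inr rfl⟩)

lemma mem_region_of_bot {x y : ℝ} (i : Fin H.m) (hx1 : H.xs i.castSucc ≤ x)
    (hx2 : x ≤ H.xs i.succ) (hy1 : H.d i ≤ y) (hy2 : y ≤ 0) : (x, y) ∈ H.region :=
  (H.mem_region_iff _).mpr (Or.inl ⟨i, ⟨hx1, hx2⟩, hy1, hy2⟩)

lemma mem_region_of_top {x y : ℝ} (j : Fin H.n) (hx1 : H.ys j.castSucc ≤ x)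
    (hx2 : x ≤ H.ys j.succ) (hy1 : 0 ≤ y) (hy2 : y ≤ H.h j) : (x, y) ∈ H.region :=
  (H.mem_region_iff _).mpr (Or.inr ⟨j, ⟨hx1, hx2⟩, hy1, hy2⟩)

lemma verts_finite : H.verts.Finite := by
  apply Set.Finite.union <;> apply Set.finite_iUnion <;> intro i <;>
    exact (Set.finite_singleton _).insert _

lemma verts_sub_region : H.verts ⊆ H.region := by
  intro v hv
  rcases (H.mem_verts_iff v).mp hv with ⟨i, hi | hi⟩ | ⟨j, hj | hj⟩ <;> subst_vars <;>
  first
  | (exact H.mem_region_of_bot i le_rfl (H.xs_mono ((Fin.castSucc_lt_succ (i := i)))).le le_rfl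
      (H.d_neg i).le)
  | (exact H.mem_region_of_bot i (H.xs_mono ((Fin.castSucc_lt_succ (i := i)))).le le_rfl le_rfl
      (H.d_neg i).le)
  | (exact H.mem_region_of_top j le_rfl (H.ys_mono ((Fin.castSucc_lt_succ (i := j)))).le
      (H.h_pos j).le le_rfl)
  | (exact H.mem_region_of_top j (H.ys_mono ((Fin.castSucc_lt_succ (i := j)))).le le_rfl
      (H.h_pos j).le le_rfl)

lemma xs_zero_le (i : Fin (H.m + 1)) : H.xs 0 ≤ H.xs i :=
  H.xs_mono.monotone (Fin.zero_le i)

lemma xs_le_last (i : Fin (H.m + 1)) : H.xs i ≤ H.xs (Fin.last H.m) :=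
  H.xs_mono.monotone (Fin.le_last i)

lemma ys_zero_le (j : Fin (H.n + 1)) : H.xs 0 ≤ H.ys j := by
  rw [← H.left_eq]; exact H.ys_mono.monotone (Fin.zero_le j)

lemma ys_le_last (j : Fin (H.n + 1)) : H.ys j ≤ H.xs (Fin.last H.m) := by
  rw [← H.right_eq]; exact H.ys_mono.monotone (Fin.le_last j)

lemma mem_region_x {p : ℝ × ℝ} (hp : p ∈ H.region) :
    H.xs 0 ≤ p.1 ∧ p.1 ≤ H.xs (Fin.last H.m) := by
  rcases (H.mem_region_iff p).mp hp with ⟨i, ⟨h1, h2⟩, _⟩ | ⟨j, ⟨h1, h2⟩, _⟩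
  · exact ⟨le_trans (H.xs_zero_le _) h1, le_trans h2 (H.xs_le_last _)⟩
  · exact ⟨le_trans (H.ys_zero_le _) h1, le_trans h2 (H.ys_le_last _)⟩

lemma mem_region_bot {p : ℝ × ℝ} (hp : p ∈ H.region) (h2 : p.2 < 0) :
    ∃ i : Fin H.m, H.xs i.castSucc ≤ p.1 ∧ p.1 ≤ H.xs i.succ ∧ H.d i ≤ p.2 := by
  rcases (H.mem_region_iff p).mp hp with ⟨i, ⟨h1, h1'⟩, h3, _⟩ | ⟨j, _, h3, _⟩
  · exact ⟨i, h1, h1', h3⟩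
  · linarith

lemma mem_region_top {p : ℝ × ℝ} (hp : p ∈ H.region) (h2 : 0 < p.2) :
    ∃ j : Fin H.n, H.ys j.castSucc ≤ p.1 ∧ p.1 ≤ H.ys j.succ ∧ p.2 ≤ H.h j := by
  rcases (H.mem_region_iff p).mp hp with ⟨i, _, _, h4⟩ | ⟨j, ⟨h1, h1'⟩, _, h4⟩
  · linarith
  · exact ⟨j, h1, h1', h4⟩

lemma verts_snd_ne {v : ℝ × ℝ} (hv : v ∈ H.verts) : v.2 ≠ 0 := by
  rcases (H.mem_verts_iff v).mp hv with ⟨i, hi | hi⟩ | ⟨j, hj | hj⟩ <;> subst_vars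
  · exact (H.d_neg i).ne
  · exact (H.d_neg i).ne
  · exact (H.h_pos j).ne'
  · exact (H.h_pos j).ne'

lemma verts_bot {v : ℝ × ℝ} (hv : v ∈ H.verts) (h2 : v.2 < 0) :
    ∃ i : Fin H.m, (v.1 = H.xs i.castSucc ∨ v.1 = H.xs i.succ) ∧ v.2 = H.d i := by
  rcases (H.mem_verts_iff v).mp hv with ⟨i, hi | hi⟩ | ⟨j, hj | hj⟩ <;> subst_vars
  · exact ⟨i, Or.inl rfl, rfl⟩
  · exact ⟨i, Or.inr rfl, rfl⟩
  · have := H.h_pos j; simp only at h2; linarith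
  · have := H.h_pos j; simp only at h2; linarith

lemma verts_top {v : ℝ × ℝ} (hv : v ∈ H.verts) (h2 : 0 < v.2) :
    ∃ j : Fin H.n, (v.1 = H.ys j.castSucc ∨ v.1 = H.ys j.succ) ∧ v.2 = H.h j := by
  rcases (H.mem_verts_iff v).mp hv with ⟨i, hi | hi⟩ | ⟨j, hj | hj⟩ <;> subst_vars
  · have := H.d_neg i; simp only at h2; linarith
  · have := H.d_neg i; simp only at h2; linarith
  · exact ⟨j, Or.inl rfl, rfl⟩
  · exact ⟨j, Or.inr rfl, rfl⟩

lemma verts_bot_bp {v : ℝ × ℝ} (hv : v ∈ H.verts) (h2 : v.2 < 0) :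
    ∃ i : Fin (H.m + 1), v.1 = H.xs i := by
  obtain ⟨i, hi | hi, _⟩ := H.verts_bot hv h2
  exacts [⟨i.castSucc, hi⟩, ⟨i.succ, hi⟩]

lemma verts_top_bp {v : ℝ × ℝ} (hv : v ∈ H.verts) (h2 : 0 < v.2) :
    ∃ j : Fin (H.n + 1), v.1 = H.ys j := by
  obtain ⟨j, hj | hj, _⟩ := H.verts_top hv h2
  exacts [⟨j.castSucc, hj⟩, ⟨j.succ, hj⟩]

end DoubleHistogram

namespace DoubleHistogram

variable (H : DoubleHistogram)

lemma LS_bddBelow (v : ℝ × ℝ) :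
    BddBelow {x | x ≤ v.1 ∧ Set.Icc x v.1 ×ˢ ({v.2} : Set ℝ) ⊆ H.region} := by
  refine ⟨H.xs 0, fun x hx => ?_⟩
  have hm : (x, v.2) ∈ Set.Icc x v.1 ×ˢ ({v.2} : Set ℝ) := ⟨⟨le_rfl, hx.1⟩, rfl⟩
  exact (H.mem_region_x (hx.2 hm)).1

lemma RS_bddAbove (v : ℝ × ℝ) :
    BddAbove {x | v.1 ≤ x ∧ Set.Icc v.1 x ×ˢ ({v.2} : Set ℝ) ⊆ H.region} := by
  refine ⟨H.xs (Fin.last H.m), fun x hx => ?_⟩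
  have hm : (x, v.2) ∈ Set.Icc v.1 x ×ˢ ({v.2} : Set ℝ) := ⟨⟨hx.1, le_rfl⟩, rfl⟩
  exact (H.mem_region_x (hx.2 hm)).2

lemma self_mem_LS {v : ℝ × ℝ} (hv : v ∈ H.region) :
    v.1 ∈ {x | x ≤ v.1 ∧ Set.Icc x v.1 ×ˢ ({v.2} : Set ℝ) ⊆ H.region} := by
  refine ⟨le_rfl, ?_⟩
  rintro ⟨t, y⟩ ⟨⟨h1, h2⟩, h3⟩
  have ht : t = v.1 := le_antisymm h2 h1
  have hy : y = v.2 := h3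
  rw [ht, hy, Prod.mk.eta]
  exact hv

lemma self_mem_RS {v : ℝ × ℝ} (hv : v ∈ H.region) :
    v.1 ∈ {x | v.1 ≤ x ∧ Set.Icc v.1 x ×ˢ ({v.2} : Set ℝ) ⊆ H.region} := by
  refine ⟨le_rfl, ?_⟩
  rintro ⟨t, y⟩ ⟨⟨h1, h2⟩, h3⟩
  have ht : t = v.1 := le_antisymm h2 h1
  have hy : y = v.2 := h3
  rw [ht, hy, Prod.mk.eta]
  exact hv

lemma lhit_le {v : ℝ × ℝ} (hv : v ∈ H.region) : H.lhit v ≤ v.1 :=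
  csInf_le (H.LS_bddBelow v) (H.self_mem_LS hv)

lemma le_rhit {v : ℝ × ℝ} (hv : v ∈ H.region) : v.1 ≤ H.rhit v :=
  le_csSup (H.RS_bddAbove v) (H.self_mem_RS hv)

lemma lhit_ge {v : ℝ × ℝ} (hv : v ∈ H.region) : H.xs 0 ≤ H.lhit v := by
  apply le_csInf ⟨v.1, H.self_mem_LS hv⟩
  intro x hx
  have hm : (x, v.2) ∈ Set.Icc x v.1 ×ˢ ({v.2} : Set ℝ) := ⟨⟨le_rfl, hx.1⟩, rfl⟩
  exact (H.mem_region_x (hx.2 hm)).1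

lemma rhit_le {v : ℝ × ℝ} (hv : v ∈ H.region) : H.rhit v ≤ H.xs (Fin.last H.m) := by
  apply csSup_le ⟨v.1, H.self_mem_RS hv⟩
  intro x hx
  have hm : (x, v.2) ∈ Set.Icc v.1 x ×ˢ ({v.2} : Set ℝ) := ⟨⟨hx.1, le_rfl⟩, rfl⟩
  exact (H.mem_region_x (hx.2 hm)).2

lemma lhit_spec_bot {v : ℝ × ℝ} (hv : v ∈ H.verts) (h2 : v.2 < 0) :
    ∃ i : Fin (H.m + 1), H.lhit v = H.xs i ∧ H.xs i ≤ v.1 ∧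
      (∀ t, H.xs i ≤ t → t ≤ v.1 → (t, v.2) ∈ H.region) ∧
      (∀ k : Fin H.m, k.succ = i → v.2 < H.d k) := by
  classical
  set P : Fin (H.m + 1) → Prop :=
    fun i => H.xs i ≤ v.1 ∧ ∀ t, H.xs i ≤ t → t ≤ v.1 → (t, v.2) ∈ H.region with hP
  obtain ⟨i₀, hx0, hy0⟩ := H.verts_bot hv h2
  have hv1le : v.1 ≤ H.xs i₀.succ := by
    rcases hx0 with h | h
    · exact h.le.trans (H.xs_mono ((Fin.castSucc_lt_succ (i := i₀)))).le
    · exact h.le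
  have hP0 : P i₀.castSucc := by
    constructor
    · rcases hx0 with h | h
      · exact h.ge
      · exact (H.xs_mono ((Fin.castSucc_lt_succ (i := i₀)))).le.trans h.ge
    · intro t ht1 ht2
      exact H.mem_region_of_bot i₀ ht1 (ht2.trans hv1le) (le_of_eq hy0.symm) h2.le
  set T := Finset.univ.filter P with hT
  have hTne : T.Nonempty := ⟨i₀.castSucc, Finset.mem_filter.mpr ⟨Finset.mem_univ _, hP0⟩⟩
  set i := T.min' hTne with hi
  have hPi : P i := (Finset.mem_filter.mp (T.min'_mem hTne)).2
  have hLS : ∀ x ∈ {x | x ≤ v.1 ∧ Set.Icc x v.1 ×ˢ ({v.2} : Set ℝ) ⊆ H.region},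
      H.xs i ≤ x := by
    rintro x ⟨hx1, hx2⟩
    have hxr : (x, v.2) ∈ H.region := hx2 ⟨⟨le_rfl, hx1⟩, rfl⟩
    obtain ⟨a, ha1, ha2, ha3⟩ := H.mem_region_bot hxr h2
    have hPa : P a.castSucc := by
      refine ⟨le_trans ha1 hx1, fun t ht1 ht2 => ?_⟩
      rcases le_total t x with h | h
      · exact H.mem_region_of_bot a ht1 (h.trans ha2) ha3 h2.le
      · exact hx2 ⟨⟨h, ht2⟩, rfl⟩
    have hia : i ≤ a.castSucc :=
      Finset.min'_le _ _ (Finset.mem_filter.mpr ⟨Finset.mem_univ _, hPa⟩)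
    exact le_trans (H.xs_mono.monotone hia) ha1
  have heq : H.lhit v = H.xs i := by
    apply le_antisymm
    · apply csInf_le (H.LS_bddBelow v)
      refine ⟨hPi.1, ?_⟩
      rintro ⟨t, y⟩ ⟨⟨h1', h2'⟩, h3'⟩
      have hy : y = v.2 := h3'
      rw [hy]
      exact hPi.2 t h1' h2'
    · exact le_csInf ⟨v.1, H.self_mem_LS (H.verts_sub_region hv)⟩ hLS
  refine ⟨i, heq, hPi.1, hPi.2, ?_⟩
  intro kk hkk
  by_contra hc
  push_neg at hc
  have hPk : P kk.castSucc := by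
    refine ⟨?_, fun t ht1 ht2 => ?_⟩
    · calc H.xs kk.castSucc ≤ H.xs kk.succ := (H.xs_mono ((Fin.castSucc_lt_succ (i := kk)))).le
        _ = H.xs i := by rw [hkk]
        _ ≤ v.1 := hPi.1
    · rcases le_total t (H.xs kk.succ) with h | h
      · exact H.mem_region_of_bot kk ht1 h hc h2.le
      · exact hPi.2 t (by rw [← hkk]; exact h) ht2
  have h1 : i ≤ kk.castSucc :=
    Finset.min'_le _ _ (Finset.mem_filter.mpr ⟨Finset.mem_univ _, hPk⟩)
  have h2' : kk.castSucc < i := by rw [← hkk]; exact (Fin.castSucc_lt_succ (i := kk))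
  exact absurd h1 (not_le.mpr h2')

lemma lhit_spec_top {v : ℝ × ℝ} (hv : v ∈ H.verts) (h2 : 0 < v.2) :
    ∃ j : Fin (H.n + 1), H.lhit v = H.ys j ∧ H.ys j ≤ v.1 ∧
      (∀ t, H.ys j ≤ t → t ≤ v.1 → (t, v.2) ∈ H.region) ∧
      (∀ k : Fin H.n, k.succ = j → H.h k < v.2) := by
  classical
  set P : Fin (H.n + 1) → Prop :=
    fun j => H.ys j ≤ v.1 ∧ ∀ t, H.ys j ≤ t → t ≤ v.1 → (t, v.2) ∈ H.region with hP
  obtain ⟨j₀, hx0, hy0⟩ := H.verts_top hv h2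
  have hv1le : v.1 ≤ H.ys j₀.succ := by
    rcases hx0 with h | h
    · exact h.le.trans (H.ys_mono ((Fin.castSucc_lt_succ (i := j₀)))).le
    · exact h.le
  have hP0 : P j₀.castSucc := by
    constructor
    · rcases hx0 with h | h
      · exact h.ge
      · exact (H.ys_mono ((Fin.castSucc_lt_succ (i := j₀)))).le.trans h.ge
    · intro t ht1 ht2
      exact H.mem_region_of_top j₀ ht1 (ht2.trans hv1le) h2.le (le_of_eq hy0)
  set T := Finset.univ.filter P with hT
  have hTne : T.Nonempty := ⟨j₀.castSucc, Finset.mem_filter.mpr ⟨Finset.mem_univ _, hP0⟩⟩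
  set j := T.min' hTne with hj
  have hPj : P j := (Finset.mem_filter.mp (T.min'_mem hTne)).2
  have hLS : ∀ x ∈ {x | x ≤ v.1 ∧ Set.Icc x v.1 ×ˢ ({v.2} : Set ℝ) ⊆ H.region},
      H.ys j ≤ x := by
    rintro x ⟨hx1, hx2⟩
    have hxr : (x, v.2) ∈ H.region := hx2 ⟨⟨le_rfl, hx1⟩, rfl⟩
    obtain ⟨a, ha1, ha2, ha3⟩ := H.mem_region_top hxr h2
    have hPa : P a.castSucc := by
      refine ⟨le_trans ha1 hx1, fun t ht1 ht2 => ?_⟩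
      rcases le_total t x with h | h
      · exact H.mem_region_of_top a ht1 (h.trans ha2) h2.le ha3
      · exact hx2 ⟨⟨h, ht2⟩, rfl⟩
    have hja : j ≤ a.castSucc :=
      Finset.min'_le _ _ (Finset.mem_filter.mpr ⟨Finset.mem_univ _, hPa⟩)
    exact le_trans (H.ys_mono.monotone hja) ha1
  have heq : H.lhit v = H.ys j := by
    apply le_antisymm
    · apply csInf_le (H.LS_bddBelow v)
      refine ⟨hPj.1, ?_⟩
      rintro ⟨t, y⟩ ⟨⟨h1', h2'⟩, h3'⟩
      have hy : y = v.2 := h3'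
      rw [hy]
      exact hPj.2 t h1' h2'
    · exact le_csInf ⟨v.1, H.self_mem_LS (H.verts_sub_region hv)⟩ hLS
  refine ⟨j, heq, hPj.1, hPj.2, ?_⟩
  intro kk hkk
  by_contra hc
  push_neg at hc
  have hPk : P kk.castSucc := by
    refine ⟨?_, fun t ht1 ht2 => ?_⟩
    · calc H.ys kk.castSucc ≤ H.ys kk.succ := (H.ys_mono ((Fin.castSucc_lt_succ (i := kk)))).le
        _ = H.ys j := by rw [hkk]
        _ ≤ v.1 := hPj.1
    · rcases le_total t (H.ys kk.succ) with h | h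
      · exact H.mem_region_of_top kk ht1 h h2.le hc
      · exact hPj.2 t (by rw [← hkk]; exact h) ht2
  have h1 : j ≤ kk.castSucc :=
    Finset.min'_le _ _ (Finset.mem_filter.mpr ⟨Finset.mem_univ _, hPk⟩)
  have h2' : kk.castSucc < j := by rw [← hkk]; exact (Fin.castSucc_lt_succ (i := kk))
  exact absurd h1 (not_le.mpr h2')

lemma rhit_spec_bot {v : ℝ × ℝ} (hv : v ∈ H.verts) (h2 : v.2 < 0) :
    ∃ i : Fin (H.m + 1), H.rhit v = H.xs i ∧ v.1 ≤ H.xs i ∧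
      (∀ t, v.1 ≤ t → t ≤ H.xs i → (t, v.2) ∈ H.region) ∧
      (∀ k : Fin H.m, k.castSucc = i → v.2 < H.d k) := by
  classical
  set P : Fin (H.m + 1) → Prop :=
    fun i => v.1 ≤ H.xs i ∧ ∀ t, v.1 ≤ t → t ≤ H.xs i → (t, v.2) ∈ H.region with hP
  obtain ⟨i₀, hx0, hy0⟩ := H.verts_bot hv h2
  have hv1le : H.xs i₀.castSucc ≤ v.1 := by
    rcases hx0 with h | h
    · exact h.ge
    · exact (H.xs_mono ((Fin.castSucc_lt_succ (i := i₀)))).le.trans h.ge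
  have hP0 : P i₀.succ := by
    constructor
    · rcases hx0 with h | h
      · exact h.le.trans (H.xs_mono ((Fin.castSucc_lt_succ (i := i₀)))).le
      · exact h.le
    · intro t ht1 ht2
      exact H.mem_region_of_bot i₀ (hv1le.trans ht1) ht2 (le_of_eq hy0.symm) h2.le
  set T := Finset.univ.filter P with hT
  have hTne : T.Nonempty := ⟨i₀.succ, Finset.mem_filter.mpr ⟨Finset.mem_univ _, hP0⟩⟩
  set i := T.max' hTne with hi
  have hPi : P i := (Finset.mem_filter.mp (T.max'_mem hTne)).2
  have hRS : ∀ x ∈ {x | v.1 ≤ x ∧ Set.Icc v.1 x ×ˢ ({v.2} : Set ℝ) ⊆ H.region},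
      x ≤ H.xs i := by
    rintro x ⟨hx1, hx2⟩
    have hxr : (x, v.2) ∈ H.region := hx2 ⟨⟨hx1, le_rfl⟩, rfl⟩
    obtain ⟨a, ha1, ha2, ha3⟩ := H.mem_region_bot hxr h2
    have hPa : P a.succ := by
      refine ⟨hx1.trans ha2, fun t ht1 ht2 => ?_⟩
      rcases le_total t x with h | h
      · exact hx2 ⟨⟨ht1, h⟩, rfl⟩
      · exact H.mem_region_of_bot a (ha1.trans h) ht2 ha3 h2.le
    have hia : a.succ ≤ i :=
      Finset.le_max' _ _ (Finset.mem_filter.mpr ⟨Finset.mem_univ _, hPa⟩)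
    exact le_trans ha2 (H.xs_mono.monotone hia)
  have heq : H.rhit v = H.xs i := by
    apply le_antisymm
    · exact csSup_le ⟨v.1, H.self_mem_RS (H.verts_sub_region hv)⟩ hRS
    · apply le_csSup (H.RS_bddAbove v)
      refine ⟨hPi.1, ?_⟩
      rintro ⟨t, y⟩ ⟨⟨h1', h2'⟩, h3'⟩
      have hy : y = v.2 := h3'
      rw [hy]
      exact hPi.2 t h1' h2'
  refine ⟨i, heq, hPi.1, hPi.2, ?_⟩
  intro kk hkk
  by_contra hc
  push_neg at hc
  have hPk : P kk.succ := by
    refine ⟨?_, fun t ht1 ht2 => ?_⟩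
    · calc v.1 ≤ H.xs i := hPi.1
        _ = H.xs kk.castSucc := by rw [hkk]
        _ ≤ H.xs kk.succ := (H.xs_mono ((Fin.castSucc_lt_succ (i := kk)))).le
    · rcases le_total t (H.xs kk.castSucc) with h | h
      · exact hPi.2 t ht1 (by rw [hkk] at h; exact h)
      · exact H.mem_region_of_bot kk h ht2 hc h2.le
  have h1 : kk.succ ≤ i :=
    Finset.le_max' _ _ (Finset.mem_filter.mpr ⟨Finset.mem_univ _, hPk⟩)
  have h2' : i < kk.succ := by rw [← hkk]; exact (Fin.castSucc_lt_succ (i := kk))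
  exact absurd h1 (not_le.mpr h2')

lemma rhit_spec_top {v : ℝ × ℝ} (hv : v ∈ H.verts) (h2 : 0 < v.2) :
    ∃ j : Fin (H.n + 1), H.rhit v = H.ys j ∧ v.1 ≤ H.ys j ∧
      (∀ t, v.1 ≤ t → t ≤ H.ys j → (t, v.2) ∈ H.region) ∧
      (∀ k : Fin H.n, k.castSucc = j → H.h k < v.2) := by
  classical
  set P : Fin (H.n + 1) → Prop :=
    fun j => v.1 ≤ H.ys j ∧ ∀ t, v.1 ≤ t → t ≤ H.ys j → (t, v.2) ∈ H.region with hP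
  obtain ⟨j₀, hx0, hy0⟩ := H.verts_top hv h2
  have hv1le : H.ys j₀.castSucc ≤ v.1 := by
    rcases hx0 with h | h
    · exact h.ge
    · exact (H.ys_mono ((Fin.castSucc_lt_succ (i := j₀)))).le.trans h.ge
  have hP0 : P j₀.succ := by
    constructor
    · rcases hx0 with h | h
      · exact h.le.trans (H.ys_mono ((Fin.castSucc_lt_succ (i := j₀)))).le
      · exact h.le
    · intro t ht1 ht2
      exact H.mem_region_of_top j₀ (hv1le.trans ht1) ht2 h2.le (le_of_eq hy0)
  set T := Finset.univ.filter P with hT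
  have hTne : T.Nonempty := ⟨j₀.succ, Finset.mem_filter.mpr ⟨Finset.mem_univ _, hP0⟩⟩
  set j := T.max' hTne with hj
  have hPj : P j := (Finset.mem_filter.mp (T.max'_mem hTne)).2
  have hRS : ∀ x ∈ {x | v.1 ≤ x ∧ Set.Icc v.1 x ×ˢ ({v.2} : Set ℝ) ⊆ H.region},
      x ≤ H.ys j := by
    rintro x ⟨hx1, hx2⟩
    have hxr : (x, v.2) ∈ H.region := hx2 ⟨⟨hx1, le_rfl⟩, rfl⟩
    obtain ⟨a, ha1, ha2, ha3⟩ := H.mem_region_top hxr h2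
    have hPa : P a.succ := by
      refine ⟨hx1.trans ha2, fun t ht1 ht2 => ?_⟩
      rcases le_total t x with h | h
      · exact hx2 ⟨⟨ht1, h⟩, rfl⟩
      · exact H.mem_region_of_top a (ha1.trans h) ht2 h2.le ha3
    have hja : a.succ ≤ j :=
      Finset.le_max' _ _ (Finset.mem_filter.mpr ⟨Finset.mem_univ _, hPa⟩)
    exact le_trans ha2 (H.ys_mono.monotone hja)
  have heq : H.rhit v = H.ys j := by
    apply le_antisymm
    · exact csSup_le ⟨v.1, H.self_mem_RS (H.verts_sub_region hv)⟩ hRS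
    · apply le_csSup (H.RS_bddAbove v)
      refine ⟨hPj.1, ?_⟩
      rintro ⟨t, y⟩ ⟨⟨h1', h2'⟩, h3'⟩
      have hy : y = v.2 := h3'
      rw [hy]
      exact hPj.2 t h1' h2'
  refine ⟨j, heq, hPj.1, hPj.2, ?_⟩
  intro kk hkk
  by_contra hc
  push_neg at hc
  have hPk : P kk.succ := by
    refine ⟨?_, fun t ht1 ht2 => ?_⟩
    · calc v.1 ≤ H.ys j := hPj.1
        _ = H.ys kk.castSucc := by rw [hkk]
        _ ≤ H.ys kk.succ := (H.ys_mono ((Fin.castSucc_lt_succ (i := kk)))).le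
    · rcases le_total t (H.ys kk.castSucc) with h | h
      · exact hPj.2 t ht1 (by rw [hkk] at h; exact h)
      · exact H.mem_region_of_top kk h ht2 h2.le hc
  have h1 : kk.succ ≤ j :=
    Finset.le_max' _ _ (Finset.mem_filter.mpr ⟨Finset.mem_univ _, hPk⟩)
  have h2' : j < kk.succ := by rw [← hkk]; exact (Fin.castSucc_lt_succ (i := kk))
  exact absurd h1 (not_le.mpr h2')

lemma seg_pt {v : ℝ × ℝ} (hv : v ∈ H.verts) {a : ℝ} (h1 : H.lhit v ≤ a)
    (h2 : a ≤ H.rhit v) : (a, v.2) ∈ H.region := by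
  rcases lt_trichotomy v.2 0 with hs | hs | hs
  · rcases le_total a v.1 with h | h
    · obtain ⟨i, heq, _, hseg, _⟩ := H.lhit_spec_bot hv hs
      exact hseg a (heq ▸ h1) h
    · obtain ⟨i, heq, _, hseg, _⟩ := H.rhit_spec_bot hv hs
      exact hseg a h (heq ▸ h2)
  · exact absurd hs (H.verts_snd_ne hv)
  · rcases le_total a v.1 with h | h
    · obtain ⟨j, heq, _, hseg, _⟩ := H.lhit_spec_top hv hs
      exact hseg a (heq ▸ h1) h
    · obtain ⟨j, heq, _, hseg, _⟩ := H.rhit_spec_top hv hs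
      exact hseg a h (heq ▸ h2)

end DoubleHistogram

namespace DoubleHistogram

variable (H : DoubleHistogram)

lemma lpt_fst (v : ℝ × ℝ) : (H.lpt v).1 = H.lhit v := by
  unfold lpt
  split_ifs with h
  · exact h.symm
  · rfl

lemma rpt_fst (v : ℝ × ℝ) : (H.rpt v).1 = H.rhit v := by
  unfold rpt
  split_ifs with h
  · exact h.symm
  · rfl

lemma mem_Iv_iff (v w : ℝ × ℝ) :
    w ∈ H.Iv v ↔ w ∈ H.verts ∧ H.lhit v ≤ w.1 ∧ w.1 ≤ H.rhit v := by
  unfold Iv ivl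
  simp only [Set.mem_setOf_eq, H.lpt_fst, H.rpt_fst]

lemma Iv_sub_verts (v : ℝ × ℝ) : H.Iv v ⊆ H.verts := fun w hw =>
  ((H.mem_Iv_iff v w).mp hw).1

lemma mem_Iv_self {v : ℝ × ℝ} (hv : v ∈ H.verts) : v ∈ H.Iv v :=
  (H.mem_Iv_iff v v).mpr ⟨hv, H.lhit_le (H.verts_sub_region hv),
    H.le_rhit (H.verts_sub_region hv)⟩

lemma mem_Iv_of_covisible {u w : ℝ × ℝ} (hu : u ∈ H.verts) (hw : w ∈ H.verts)
    (hc : H.covisible u w) : w ∈ H.Iv u := by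
  refine (H.mem_Iv_iff u w).mpr ⟨hw, ?_, ?_⟩
  · rcases le_total w.1 u.1 with h | h
    · apply csInf_le (H.LS_bddBelow u)
      refine ⟨h, ?_⟩
      rintro ⟨t, y⟩ ⟨⟨h1, h2⟩, h3⟩
      have hy : y = u.2 := h3
      apply hc
      refine ⟨⟨le_trans (by rw [min_eq_right h]) h1, le_trans h2 (le_max_left _ _)⟩, ?_⟩
      rw [hy]
      exact ⟨min_le_left _ _, le_max_left _ _⟩
    · exact le_trans (H.lhit_le (H.verts_sub_region hu)) h
  · rcases le_total u.1 w.1 with h | h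
    · apply le_csSup (H.RS_bddAbove u)
      refine ⟨h, ?_⟩
      rintro ⟨t, y⟩ ⟨⟨h1, h2⟩, h3⟩
      have hy : y = u.2 := h3
      apply hc
      refine ⟨⟨le_trans (min_le_left _ _) h1, le_trans h2 (by rw [max_eq_right h])⟩, ?_⟩
      rw [hy]
      exact ⟨min_le_left _ _, le_max_left _ _⟩
    · exact le_trans h (H.le_rhit (H.verts_sub_region hu))

lemma cov_same_bot {u w : ℝ × ℝ} (hu : u ∈ H.verts) (h1 : u.2 < 0) (h2 : w.2 < 0)
    (h3 : u.2 ≤ w.2) (h4 : H.lhit u ≤ w.1) (h5 : w.1 ≤ H.rhit u) : H.covisible u w := by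
  rintro ⟨a, b⟩ ⟨⟨ha1, ha2⟩, hb1, hb2⟩
  have haL : H.lhit u ≤ a :=
    le_trans (le_min (H.lhit_le (H.verts_sub_region hu)) h4) ha1
  have haR : a ≤ H.rhit u :=
    le_trans ha2 (max_le (H.le_rhit (H.verts_sub_region hu)) h5)
  obtain ⟨i, hi1, hi2, hi3⟩ := H.mem_region_bot (H.seg_pt hu haL haR) h1
  apply H.mem_region_of_bot i hi1 hi2
  · exact le_trans hi3 (le_trans (le_min le_rfl h3) hb1)
  · exact le_trans hb2 (by rw [max_le_iff]; exact ⟨h1.le, h2.le⟩)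

lemma cov_same_top {u w : ℝ × ℝ} (hu : u ∈ H.verts) (h1 : 0 < u.2) (h2 : 0 < w.2)
    (h3 : w.2 ≤ u.2) (h4 : H.lhit u ≤ w.1) (h5 : w.1 ≤ H.rhit u) : H.covisible u w := by
  rintro ⟨a, b⟩ ⟨⟨ha1, ha2⟩, hb1, hb2⟩
  have haL : H.lhit u ≤ a :=
    le_trans (le_min (H.lhit_le (H.verts_sub_region hu)) h4) ha1
  have haR : a ≤ H.rhit u :=
    le_trans ha2 (max_le (H.le_rhit (H.verts_sub_region hu)) h5)
  obtain ⟨j, hj1, hj2, hj3⟩ := H.mem_region_top (H.seg_pt hu haL haR) h1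
  apply H.mem_region_of_top j hj1 hj2
  · exact le_trans (by rw [le_min_iff]; exact ⟨h1.le, h2.le⟩) hb1
  · exact le_trans hb2 (le_trans (max_le le_rfl h3) hj3)

lemma cov_opp_bt {u w : ℝ × ℝ} (hu : u ∈ H.verts) (hw : w ∈ H.verts) (h1 : u.2 < 0)
    (h2 : 0 < w.2) (h4 : H.lhit u ≤ w.1) (h5 : w.1 ≤ H.rhit u)
    (hz : ∀ z ∈ H.verts, 0 < z.2 → min u.1 w.1 ≤ z.1 → z.1 ≤ max u.1 w.1 → w.2 ≤ z.2) :
    H.covisible u w := by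
  rintro ⟨a, b⟩ ⟨⟨ha1, ha2⟩, hb1, hb2⟩
  have haL : H.lhit u ≤ a :=
    le_trans (le_min (H.lhit_le (H.verts_sub_region hu)) h4) ha1
  have haR : a ≤ H.rhit u :=
    le_trans ha2 (max_le (H.le_rhit (H.verts_sub_region hu)) h5)
  rcases le_total b 0 with hb | hb
  · obtain ⟨i, hi1, hi2, hi3⟩ := H.mem_region_bot (H.seg_pt hu haL haR) h1
    apply H.mem_region_of_bot i hi1 hi2 _ hb
    calc H.d i ≤ u.2 := hi3
      _ = min u.2 w.2 := (min_eq_left (by linarith)).symm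
      _ ≤ b := hb1
  · have hy0 : H.ys 0 ≤ a := by
      rw [H.left_eq]
      exact le_trans (H.lhit_ge (H.verts_sub_region hu)) haL
    have hyl : a ≤ H.ys (Fin.last H.n) := by
      rw [H.right_eq]
      exact le_trans haR (H.rhit_le (H.verts_sub_region hu))
    obtain ⟨j, hj1, hj2⟩ := fin_locate H.hn H.ys H.ys_mono hy0 hyl
    obtain ⟨π, hπ⟩ := H.verts_top_bp hw h2
    obtain ⟨e, he, hep, heq'⟩ := fin_endpoint H.ys H.ys_mono j π
      (by rw [← hπ]; exact min_le_right _ _) (by rw [← hπ]; exact le_max_right _ _)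
      hj1 hj2 ha1 ha2
    have hzv : (H.ys e, H.h j) ∈ H.verts := by
      rcases he with h | h <;> subst h
      exacts [H.vert_tl j, H.vert_tr j]
    have hwh : w.2 ≤ H.h j := hz _ hzv (H.h_pos j) hep heq'
    apply H.mem_region_of_top j hj1 hj2 hb
    calc b ≤ max u.2 w.2 := hb2
      _ = w.2 := max_eq_right (by linarith)
      _ ≤ H.h j := hwh

lemma cov_opp_tb {u w : ℝ × ℝ} (hu : u ∈ H.verts) (hw : w ∈ H.verts) (h1 : 0 < u.2)
    (h2 : w.2 < 0) (h4 : H.lhit u ≤ w.1) (h5 : w.1 ≤ H.rhit u)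
    (hz : ∀ z ∈ H.verts, z.2 < 0 → min u.1 w.1 ≤ z.1 → z.1 ≤ max u.1 w.1 → z.2 ≤ w.2) :
    H.covisible u w := by
  rintro ⟨a, b⟩ ⟨⟨ha1, ha2⟩, hb1, hb2⟩
  have haL : H.lhit u ≤ a :=
    le_trans (le_min (H.lhit_le (H.verts_sub_region hu)) h4) ha1
  have haR : a ≤ H.rhit u :=
    le_trans ha2 (max_le (H.le_rhit (H.verts_sub_region hu)) h5)
  rcases le_total 0 b with hb | hb
  · obtain ⟨j, hj1, hj2, hj3⟩ := H.mem_region_top (H.seg_pt hu haL haR) h1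
    apply H.mem_region_of_top j hj1 hj2 hb
    calc b ≤ max u.2 w.2 := hb2
      _ = u.2 := max_eq_left (by linarith)
      _ ≤ H.h j := hj3
  · have hx0 : H.xs 0 ≤ a := le_trans (H.lhit_ge (H.verts_sub_region hu)) haL
    have hxl : a ≤ H.xs (Fin.last H.m) :=
      le_trans haR (H.rhit_le (H.verts_sub_region hu))
    obtain ⟨i, hi1, hi2⟩ := fin_locate H.hm H.xs H.xs_mono hx0 hxl
    obtain ⟨π, hπ⟩ := H.verts_bot_bp hw h2
    obtain ⟨e, he, hep, heq'⟩ := fin_endpoint H.xs H.xs_mono i π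
      (by rw [← hπ]; exact min_le_right _ _) (by rw [← hπ]; exact le_max_right _ _)
      hi1 hi2 ha1 ha2
    have hzv : (H.xs e, H.d i) ∈ H.verts := by
      rcases he with h | h <;> subst h
      exacts [H.vert_bl i, H.vert_br i]
    have hwd : H.d i ≤ w.2 := hz _ hzv (H.d_neg i) hep heq'
    apply H.mem_region_of_bot i hi1 hi2 _ hb
    calc H.d i ≤ w.2 := hwd
      _ = min u.2 w.2 := (min_eq_right (by linarith)).symm
      _ ≤ b := hb1

lemma span_bot {v : ℝ × ℝ} (hv : v ∈ H.verts) (h2 : v.2 < 0) {α β : ℝ}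
    (hα0 : H.xs 0 ≤ α) (hβ0 : β ≤ H.xs (Fin.last H.m)) (h3 : α ≤ v.1) (h4 : v.1 ≤ β)
    (hmin : ∀ z ∈ H.verts, z.2 < 0 → α ≤ z.1 → z.1 ≤ β → |v.2| ≤ |z.2|) :
    H.lhit v ≤ α ∧ β ≤ H.rhit v := by
  have hseg : ∀ t, α ≤ t → t ≤ β → (t, v.2) ∈ H.region := by
    intro t ht1 ht2
    obtain ⟨i, hi1, hi2⟩ :=
      fin_locate H.hm H.xs H.xs_mono (le_trans hα0 ht1) (le_trans ht2 hβ0)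
    obtain ⟨π, hπ⟩ := H.verts_bot_bp hv h2
    obtain ⟨e, he, hep, heq'⟩ := fin_endpoint H.xs H.xs_mono i π
      (by rw [← hπ]; exact h3) (by rw [← hπ]; exact h4) hi1 hi2 ht1 ht2
    have hzv : (H.xs e, H.d i) ∈ H.verts := by
      rcases he with h | h <;> subst h
      exacts [H.vert_bl i, H.vert_br i]
    have hd : H.d i ≤ v.2 :=
      (abs_le_abs_neg h2 (H.d_neg i)).mp (hmin _ hzv (H.d_neg i) hep heq')
    exact H.mem_region_of_bot i hi1 hi2 hd h2.le
  constructor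
  · apply csInf_le (H.LS_bddBelow v)
    refine ⟨h3, ?_⟩
    rintro ⟨t, y⟩ ⟨⟨ht1, ht2⟩, hy⟩
    have : y = v.2 := hy
    rw [this]
    exact hseg t ht1 (le_trans ht2 h4)
  · apply le_csSup (H.RS_bddAbove v)
    refine ⟨h4, ?_⟩
    rintro ⟨t, y⟩ ⟨⟨ht1, ht2⟩, hy⟩
    have : y = v.2 := hy
    rw [this]
    exact hseg t (le_trans h3 ht1) ht2

lemma span_top {v : ℝ × ℝ} (hv : v ∈ H.verts) (h2 : 0 < v.2) {α β : ℝ}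
    (hα0 : H.xs 0 ≤ α) (hβ0 : β ≤ H.xs (Fin.last H.m)) (h3 : α ≤ v.1) (h4 : v.1 ≤ β)
    (hmin : ∀ z ∈ H.verts, 0 < z.2 → α ≤ z.1 → z.1 ≤ β → |v.2| ≤ |z.2|) :
    H.lhit v ≤ α ∧ β ≤ H.rhit v := by
  have hseg : ∀ t, α ≤ t → t ≤ β → (t, v.2) ∈ H.region := by
    intro t ht1 ht2
    have hy0 : H.ys 0 ≤ t := by rw [H.left_eq]; exact le_trans hα0 ht1
    have hyl : t ≤ H.ys (Fin.last H.n) := by rw [H.right_eq]; exact le_trans ht2 hβ0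
    obtain ⟨j, hj1, hj2⟩ := fin_locate H.hn H.ys H.ys_mono hy0 hyl
    obtain ⟨π, hπ⟩ := H.verts_top_bp hv h2
    obtain ⟨e, he, hep, heq'⟩ := fin_endpoint H.ys H.ys_mono j π
      (by rw [← hπ]; exact h3) (by rw [← hπ]; exact h4) hj1 hj2 ht1 ht2
    have hzv : (H.ys e, H.h j) ∈ H.verts := by
      rcases he with h | h <;> subst h
      exacts [H.vert_tl j, H.vert_tr j]
    have hd : v.2 ≤ H.h j :=
      (abs_le_abs_pos h2 (H.h_pos j)).mp (hmin _ hzv (H.h_pos j) hep heq')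
    exact H.mem_region_of_top j hj1 hj2 h2.le hd
  constructor
  · apply csInf_le (H.LS_bddBelow v)
    refine ⟨h3, ?_⟩
    rintro ⟨t, y⟩ ⟨⟨ht1, ht2⟩, hy⟩
    have : y = v.2 := hy
    rw [this]
    exact hseg t ht1 (le_trans ht2 h4)
  · apply le_csSup (H.RS_bddAbove v)
    refine ⟨h4, ?_⟩
    rintro ⟨t, y⟩ ⟨⟨ht1, ht2⟩, hy⟩
    have : y = v.2 := hy
    rw [this]
    exact hseg t (le_trans h3 ht1) ht2

lemma leftmostLowest_spec {S : Set (ℝ × ℝ)} (hsub : S ⊆ H.verts) (hne : S.Nonempty)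
    (hsign : (∀ q ∈ S, q.2 < 0) ∨ (∀ q ∈ S, 0 < q.2)) :
    leftmostLowest S ∈ S ∧ ∀ q ∈ S, |(leftmostLowest S).2| ≤ |q.2| := by
  have hfin : S.Finite := H.verts_finite.subset hsub
  obtain ⟨q₀, hq₀S, hq₀min⟩ := Set.exists_min_image S (fun q => |q.2|) hfin hne
  set X := sInf {x | ∃ y, (x, y) ∈ S ∧ ∀ q ∈ S, |y| ≤ |q.2|} with hX
  have hXset_ne : {x | ∃ y, (x, y) ∈ S ∧ ∀ q ∈ S, |y| ≤ |q.2|}.Nonempty :=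
    ⟨q₀.1, q₀.2, by rw [Prod.mk.eta]; exact hq₀S, hq₀min⟩
  have hXfin : {x | ∃ y, (x, y) ∈ S ∧ ∀ q ∈ S, |y| ≤ |q.2|}.Finite := by
    apply (hfin.image Prod.fst).subset
    rintro x ⟨y, hy, -⟩
    exact ⟨(x, y), hy, rfl⟩
  have hXmem := hXset_ne.csInf_mem hXfin
  rw [← hX] at hXmem
  obtain ⟨y₁, hy₁S, hy₁min⟩ := hXmem
  have hset : {y | y ∈ {y | (X, y) ∈ S} ∧ ∀ y' ∈ {y | (X, y) ∈ S}, |y| ≤ |y'|}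
      = {y₁} := by
    apply Set.eq_singleton_iff_unique_mem.mpr
    constructor
    · exact ⟨hy₁S, fun y' hy' => hy₁min _ hy'⟩
    · rintro y ⟨hyS, hymin⟩
      have hle1 : |y| ≤ |y₁| := hymin _ hy₁S
      have hle2 : |y₁| ≤ |y| := hy₁min _ hyS
      have heq : |y| = |y₁| := le_antisymm hle1 hle2
      rcases hsign with hs | hs
      · have h1 := hs _ hyS
        have h2 := hs _ hy₁S
        rw [abs_of_neg h1, abs_of_neg h2] at heq
        linarith
      · have h1 := hs _ hyS
        have h2 := hs _ hy₁S
        rwa [abs_of_pos h1, abs_of_pos h2] at heq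
  have h2nd : closestToBase {y | (X, y) ∈ S} = y₁ := by
    rw [closestToBase, hset, csSup_singleton]
  have hLL : leftmostLowest S = (X, y₁) := by
    unfold leftmostLowest
    rw [← hX, h2nd]
  rw [hLL]
  exact ⟨hy₁S, hy₁min⟩

end DoubleHistogram

namespace DoubleHistogram

variable (H : DoubleHistogram)

lemma Ipow_zero (s : ℝ × ℝ) : H.Ipow s 0 = {s} := rfl

lemma Ipow_succ (s : ℝ × ℝ) (k : ℕ) :
    H.Ipow s (k + 1) = H.Iv (H.bdtd s k).1 ∪ H.Iv (H.bdtd s k).2 := rfl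

lemma bdtd_zero (s : ℝ × ℝ) : H.bdtd s 0 = (s, s) := rfl

lemma bdtd_succ (s : ℝ × ℝ) (k : ℕ) :
    H.bdtd s (k + 1) =
      (if {v | v ∈ H.Ipow s (k + 1) ∧ v.2 < 0} = ∅ then
        (leftmostLowest {v | v ∈ H.Ipow s (k + 1) ∧ 0 < v.2},
          leftmostLowest {v | v ∈ H.Ipow s (k + 1) ∧ 0 < v.2})
      else if {v | v ∈ H.Ipow s (k + 1) ∧ 0 < v.2} = ∅ then
        (leftmostLowest {v | v ∈ H.Ipow s (k + 1) ∧ v.2 < 0},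
          leftmostLowest {v | v ∈ H.Ipow s (k + 1) ∧ v.2 < 0})
      else
        (leftmostLowest {v | v ∈ H.Ipow s (k + 1) ∧ v.2 < 0},
          leftmostLowest {v | v ∈ H.Ipow s (k + 1) ∧ 0 < v.2})) := rfl

lemma bdtd_succ_cases (s : ℝ × ℝ) (k : ℕ) :
    ({v | v ∈ H.Ipow s (k + 1) ∧ v.2 < 0} = ∅ ∧
      H.bdtd s (k + 1) = (leftmostLowest {v | v ∈ H.Ipow s (k + 1) ∧ 0 < v.2},
        leftmostLowest {v | v ∈ H.Ipow s (k + 1) ∧ 0 < v.2})) ∨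
    ({v | v ∈ H.Ipow s (k + 1) ∧ v.2 < 0} ≠ ∅ ∧
      {v | v ∈ H.Ipow s (k + 1) ∧ 0 < v.2} = ∅ ∧
      H.bdtd s (k + 1) = (leftmostLowest {v | v ∈ H.Ipow s (k + 1) ∧ v.2 < 0},
        leftmostLowest {v | v ∈ H.Ipow s (k + 1) ∧ v.2 < 0})) ∨
    ({v | v ∈ H.Ipow s (k + 1) ∧ v.2 < 0} ≠ ∅ ∧
      {v | v ∈ H.Ipow s (k + 1) ∧ 0 < v.2} ≠ ∅ ∧
      H.bdtd s (k + 1) = (leftmostLowest {v | v ∈ H.Ipow s (k + 1) ∧ v.2 < 0},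
        leftmostLowest {v | v ∈ H.Ipow s (k + 1) ∧ 0 < v.2})) := by
  by_cases hm : {v | v ∈ H.Ipow s (k + 1) ∧ v.2 < 0} = ∅
  · left
    exact ⟨hm, by rw [H.bdtd_succ s k, if_pos hm]⟩
  · by_cases hp : {v | v ∈ H.Ipow s (k + 1) ∧ 0 < v.2} = ∅
    · right; left
      exact ⟨hm, hp, by rw [H.bdtd_succ s k, if_neg hm, if_pos hp]⟩
    · right; right
      exact ⟨hm, hp, by rw [H.bdtd_succ s k, if_neg hm, if_neg hp]⟩

lemma adj_lemma {u x : ℝ × ℝ} (hu : u ∈ H.verts) (hxv : x ∈ H.verts) (hx : x ∈ H.Iv u)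
    (hmin : ∀ z ∈ H.Iv u, (x.2 < 0 ∧ z.2 < 0) ∨ (0 < x.2 ∧ 0 < z.2) → |x.2| ≤ |z.2|) :
    x = u ∨ H.covisible u x := by
  by_cases hq : x = u
  · exact Or.inl hq
  right
  obtain ⟨-, h4, h5⟩ := (H.mem_Iv_iff u x).mp hx
  rcases (H.verts_snd_ne hu).lt_or_gt with hu2 | hu2 <;>
    rcases (H.verts_snd_ne hxv).lt_or_gt with hx2 | hx2
  · -- both bottom
    have := hmin u (H.mem_Iv_self hu) (Or.inl ⟨hx2, hu2⟩)
    exact H.cov_same_bot hu hu2 hx2 ((abs_le_abs_neg hx2 hu2).mp this) h4 h5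
  · -- u bottom, x top
    apply H.cov_opp_bt hu hxv hu2 hx2 h4 h5
    intro z hzv hz2 hz3 hz4
    have hzIv : z ∈ H.Iv u := (H.mem_Iv_iff u z).mpr ⟨hzv,
      le_trans (le_min (H.lhit_le (H.verts_sub_region hu)) h4) hz3,
      le_trans hz4 (max_le (H.le_rhit (H.verts_sub_region hu)) h5)⟩
    exact (abs_le_abs_pos hx2 hz2).mp (hmin z hzIv (Or.inr ⟨hx2, hz2⟩))
  · -- u top, x bottom
    apply H.cov_opp_tb hu hxv hu2 hx2 h4 h5
    intro z hzv hz2 hz3 hz4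
    have hzIv : z ∈ H.Iv u := (H.mem_Iv_iff u z).mpr ⟨hzv,
      le_trans (le_min (H.lhit_le (H.verts_sub_region hu)) h4) hz3,
      le_trans hz4 (max_le (H.le_rhit (H.verts_sub_region hu)) h5)⟩
    exact (abs_le_abs_neg hx2 hz2).mp (hmin z hzIv (Or.inl ⟨hx2, hz2⟩))
  · -- both top
    have := hmin u (H.mem_Iv_self hu) (Or.inr ⟨hx2, hu2⟩)
    exact H.cov_same_top hu hu2 hx2 ((abs_le_abs_pos hx2 hu2).mp this) h4 h5

lemma walk_extend (s : ↥H.verts) (k : ℕ) {u x : ℝ × ℝ} (hxv : x ∈ H.verts)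
    (hw : ∃ b : ↥H.verts, ∃ p : H.visGraph.Walk s b, (b : ℝ × ℝ) = u ∧ p.length ≤ k)
    (hadj : x = u ∨ H.covisible u x) :
    ∃ b : ↥H.verts, ∃ p : H.visGraph.Walk s b, (b : ℝ × ℝ) = x ∧ p.length ≤ k + 1 := by
  obtain ⟨b, p, hb, hl⟩ := hw
  by_cases hx : x = u
  · exact ⟨b, p, by rw [hb, hx], hl.trans (Nat.le_succ k)⟩
  rcases hadj with h | h
  · exact absurd h hx
  · have hadj' : H.visGraph.Adj b ⟨x, hxv⟩ := by
      refine ⟨?_, ?_⟩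
      · intro hEq
        apply hx
        have hval : (b : ℝ × ℝ) = x := by rw [hEq]
        rw [← hval, hb]
      · show H.covisible (b : ℝ × ℝ) x
        rw [hb]; exact h
    refine ⟨⟨x, hxv⟩, p.concat hadj', rfl, ?_⟩
    rw [SimpleGraph.Walk.length_concat]
    omega

end DoubleHistogram

namespace DoubleHistogram

variable (H : DoubleHistogram)

lemma Ipow_sub_verts (s : ↥H.verts) (k : ℕ) : H.Ipow (s : ℝ × ℝ) k ⊆ H.verts := by
  cases k with
  | zero =>
    rintro z hz
    have : z = (s : ℝ × ℝ) := hz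
    rw [this]; exact s.2
  | succ k =>
    rw [H.Ipow_succ]
    exact Set.union_subset (H.Iv_sub_verts _) (H.Iv_sub_verts _)

lemma master (s : ↥H.verts) : ∀ k : ℕ,
    (H.bdtd (s : ℝ × ℝ) k).1 ∈ H.Ipow (s : ℝ × ℝ) k ∧
    (H.bdtd (s : ℝ × ℝ) k).2 ∈ H.Ipow (s : ℝ × ℝ) k ∧
    (∃ b : ↥H.verts, ∃ p : H.visGraph.Walk s b,
      (b : ℝ × ℝ) = (H.bdtd (s : ℝ × ℝ) k).1 ∧ p.length ≤ k) ∧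
    (∃ b : ↥H.verts, ∃ p : H.visGraph.Walk s b,
      (b : ℝ × ℝ) = (H.bdtd (s : ℝ × ℝ) k).2 ∧ p.length ≤ k) ∧
    ({v | v ∈ H.Ipow (s : ℝ × ℝ) k ∧ v.2 < 0} = ∅ ∧
        (H.bdtd (s : ℝ × ℝ) k).1 = (H.bdtd (s : ℝ × ℝ) k).2 ∨
      ((H.bdtd (s : ℝ × ℝ) k).1.2 < 0 ∧
        ∀ z ∈ H.Ipow (s : ℝ × ℝ) k, z.2 < 0 → |(H.bdtd (s : ℝ × ℝ) k).1.2| ≤ |z.2|)) ∧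
    ({v | v ∈ H.Ipow (s : ℝ × ℝ) k ∧ 0 < v.2} = ∅ ∧
        (H.bdtd (s : ℝ × ℝ) k).2 = (H.bdtd (s : ℝ × ℝ) k).1 ∨
      (0 < (H.bdtd (s : ℝ × ℝ) k).2.2 ∧
        ∀ z ∈ H.Ipow (s : ℝ × ℝ) k, 0 < z.2 → |(H.bdtd (s : ℝ × ℝ) k).2.2| ≤ |z.2|)) ∧
    (∀ z ∈ H.Ipow (s : ℝ × ℝ) k,
      H.lhit (H.bdtd (s : ℝ × ℝ) k).1 ≤ z.1 ∧ z.1 ≤ H.rhit (H.bdtd (s : ℝ × ℝ) k).1) ∧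
    (∀ z ∈ H.Ipow (s : ℝ × ℝ) k,
      H.lhit (H.bdtd (s : ℝ × ℝ) k).2 ≤ z.1 ∧ z.1 ≤ H.rhit (H.bdtd (s : ℝ × ℝ) k).2) := by
  intro k
  induction k with
  | zero =>
    refine ⟨Set.mem_singleton _, Set.mem_singleton _,
      ⟨s, SimpleGraph.Walk.nil, rfl, by simp⟩, ⟨s, SimpleGraph.Walk.nil, rfl, by simp⟩,
      ?_, ?_, ?_, ?_⟩
    · rcases (H.verts_snd_ne s.2).lt_or_gt with hs | hs
      · right
        refine ⟨hs, fun z hz h2 => ?_⟩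
        have : z = (s : ℝ × ℝ) := hz
        rw [this]
        exact le_rfl
      · left
        refine ⟨?_, rfl⟩
        apply Set.eq_empty_iff_forall_notMem.mpr
        rintro v ⟨hv, h2⟩
        have : v = (s : ℝ × ℝ) := hv
        rw [this] at h2
        linarith
    · rcases (H.verts_snd_ne s.2).lt_or_gt with hs | hs
      · left
        refine ⟨?_, rfl⟩
        apply Set.eq_empty_iff_forall_notMem.mpr
        rintro v ⟨hv, h2⟩
        have : v = (s : ℝ × ℝ) := hv
        rw [this] at h2
        linarith
      · right
        refine ⟨hs, fun z hz h2 => ?_⟩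
        have : z = (s : ℝ × ℝ) := hz
        rw [this]
        exact le_rfl
    · intro z hz
      have : z = (s : ℝ × ℝ) := hz
      rw [this]
      exact ⟨H.lhit_le (H.verts_sub_region s.2), H.le_rhit (H.verts_sub_region s.2)⟩
    · intro z hz
      have : z = (s : ℝ × ℝ) := hz
      rw [this]
      exact ⟨H.lhit_le (H.verts_sub_region s.2), H.le_rhit (H.verts_sub_region s.2)⟩
  | succ k IH =>
    obtain ⟨hBm, hTm, hwB, hwT, hIII, hIV, hWB, hWT⟩ := IH
    have hBv : (H.bdtd (s : ℝ × ℝ) k).1 ∈ H.verts := by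
      obtain ⟨b, p, hb, -⟩ := hwB
      rw [← hb]; exact b.2
    have hTv : (H.bdtd (s : ℝ × ℝ) k).2 ∈ H.verts := by
      obtain ⟨b, p, hb, -⟩ := hwT
      rw [← hb]; exact b.2
    have regB := H.verts_sub_region hBv
    have regT := H.verts_sub_region hTv
    have hJ := H.Ipow_succ (s : ℝ × ℝ) k
    have hsubV : H.Ipow (s : ℝ × ℝ) (k + 1) ⊆ H.verts := H.Ipow_sub_verts s (k + 1)
    have hBJ : (H.bdtd (s : ℝ × ℝ) k).1 ∈ H.Ipow (s : ℝ × ℝ) (k + 1) := by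
      rw [hJ]; exact Or.inl (H.mem_Iv_self hBv)
    have hcB : H.lhit (H.bdtd (s : ℝ × ℝ) k).1 ≤ (H.bdtd (s : ℝ × ℝ) k).1.1 ∧
        (H.bdtd (s : ℝ × ℝ) k).1.1 ≤ H.rhit (H.bdtd (s : ℝ × ℝ) k).1 :=
      ⟨H.lhit_le regB, H.le_rhit regB⟩
    have hcT : H.lhit (H.bdtd (s : ℝ × ℝ) k).2 ≤ (H.bdtd (s : ℝ × ℝ) k).1.1 ∧
        (H.bdtd (s : ℝ × ℝ) k).1.1 ≤ H.rhit (H.bdtd (s : ℝ × ℝ) k).2 := hWT _ hBm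
    have hrange : ∀ z ∈ H.Ipow (s : ℝ × ℝ) (k + 1),
        min (H.lhit (H.bdtd (s : ℝ × ℝ) k).1) (H.lhit (H.bdtd (s : ℝ × ℝ) k).2) ≤ z.1 ∧
        z.1 ≤ max (H.rhit (H.bdtd (s : ℝ × ℝ) k).1) (H.rhit (H.bdtd (s : ℝ × ℝ) k).2) := by
      intro z hz
      rw [hJ] at hz
      rcases hz with hz | hz
      · obtain ⟨-, h1, h2⟩ := (H.mem_Iv_iff _ z).mp hz
        exact ⟨le_trans (min_le_left _ _) h1, le_trans h2 (le_max_left _ _)⟩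
      · obtain ⟨-, h1, h2⟩ := (H.mem_Iv_iff _ z).mp hz
        exact ⟨le_trans (min_le_right _ _) h1, le_trans h2 (le_max_right _ _)⟩
    have hcover : ∀ z ∈ H.verts,
        min (H.lhit (H.bdtd (s : ℝ × ℝ) k).1) (H.lhit (H.bdtd (s : ℝ × ℝ) k).2) ≤ z.1 →
        z.1 ≤ max (H.rhit (H.bdtd (s : ℝ × ℝ) k).1) (H.rhit (H.bdtd (s : ℝ × ℝ) k).2) →
        z ∈ H.Ipow (s : ℝ × ℝ) (k + 1) := by
      intro z hzv h1 h2
      rcases interval_union hcB.1 hcB.2 hcT.1 hcT.2 h1 h2 with ⟨l, r⟩ | ⟨l, r⟩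
      · rw [hJ]; exact Or.inl ((H.mem_Iv_iff _ _).mpr ⟨hzv, l, r⟩)
      · rw [hJ]; exact Or.inr ((H.mem_Iv_iff _ _).mpr ⟨hzv, l, r⟩)
    have hα0 : H.xs 0 ≤
        min (H.lhit (H.bdtd (s : ℝ × ℝ) k).1) (H.lhit (H.bdtd (s : ℝ × ℝ) k).2) :=
      le_min (H.lhit_ge regB) (H.lhit_ge regT)
    have hβ0 : max (H.rhit (H.bdtd (s : ℝ × ℝ) k).1) (H.rhit (H.bdtd (s : ℝ × ℝ) k).2) ≤
        H.xs (Fin.last H.m) := max_le (H.rhit_le regB) (H.rhit_le regT)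
    have hwindow : ∀ X ∈ H.Ipow (s : ℝ × ℝ) (k + 1),
        ((X.2 < 0 ∧ ∀ z ∈ H.Ipow (s : ℝ × ℝ) (k + 1), z.2 < 0 → |X.2| ≤ |z.2|) ∨
         (0 < X.2 ∧ ∀ z ∈ H.Ipow (s : ℝ × ℝ) (k + 1), 0 < z.2 → |X.2| ≤ |z.2|)) →
        ∀ z ∈ H.Ipow (s : ℝ × ℝ) (k + 1), H.lhit X ≤ z.1 ∧ z.1 ≤ H.rhit X := by
      intro X hX hsgn z hz
      have hXv := hsubV hX
      have hr := hrange X hX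
      obtain ⟨hzr1, hzr2⟩ := hrange z hz
      rcases hsgn with ⟨h1, h2⟩ | ⟨h1, h2⟩
      · have hs := H.span_bot hXv h1 hα0 hβ0 hr.1 hr.2
          (fun z' hz'v hz'2 hl hr' => h2 z' (hcover z' hz'v hl hr') hz'2)
        exact ⟨le_trans hs.1 hzr1, le_trans hzr2 hs.2⟩
      · have hs := H.span_top hXv h1 hα0 hβ0 hr.1 hr.2
          (fun z' hz'v hz'2 hl hr' => h2 z' (hcover z' hz'v hl hr') hz'2)
        exact ⟨le_trans hs.1 hzr1, le_trans hzr2 hs.2⟩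
    have hwalk : ∀ X ∈ H.Ipow (s : ℝ × ℝ) (k + 1), X ∈ H.verts →
        (∀ z ∈ H.Ipow (s : ℝ × ℝ) (k + 1),
          (X.2 < 0 ∧ z.2 < 0) ∨ (0 < X.2 ∧ 0 < z.2) → |X.2| ≤ |z.2|) →
        ∃ b : ↥H.verts, ∃ p : H.visGraph.Walk s b, (b : ℝ × ℝ) = X ∧ p.length ≤ k + 1 := by
      intro X hX hXv hmin
      rw [hJ] at hX
      rcases hX with hX | hX
      · apply H.walk_extend s k hXv hwB
        apply H.adj_lemma hBv hXv hX
        intro z hzIv hs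
        exact hmin z (by rw [hJ]; exact Or.inl hzIv) hs
      · apply H.walk_extend s k hXv hwT
        apply H.adj_lemma hTv hXv hX
        intro z hzIv hs
        exact hmin z (by rw [hJ]; exact Or.inr hzIv) hs
    rcases H.bdtd_succ_cases (s : ℝ × ℝ) k with ⟨hm, hbd⟩ | ⟨hm, hp, hbd⟩ | ⟨hm, hp, hbd⟩
    · -- no bottom vertices in I^{k+1}
      have hJpne : {v | v ∈ H.Ipow (s : ℝ × ℝ) (k + 1) ∧ 0 < v.2}.Nonempty := by
        rcases (H.verts_snd_ne hBv).lt_or_gt with h | h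
        · exfalso
          rw [Set.eq_empty_iff_forall_notMem] at hm
          exact hm _ ⟨hBJ, h⟩
        · exact ⟨_, hBJ, h⟩
      obtain ⟨hLmem, hLmin⟩ := H.leftmostLowest_spec (fun v hv => hsubV hv.1) hJpne
        (Or.inr fun q hq => hq.2)
      have hLIp := hLmem.1
      have hL2 := hLmem.2
      have hLv := hsubV hLIp
      have hminP : ∀ z ∈ H.Ipow (s : ℝ × ℝ) (k + 1),
          ((leftmostLowest {v | v ∈ H.Ipow (s : ℝ × ℝ) (k + 1) ∧ 0 < v.2}).2 < 0 ∧ z.2 < 0) ∨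
          (0 < (leftmostLowest {v | v ∈ H.Ipow (s : ℝ × ℝ) (k + 1) ∧ 0 < v.2}).2 ∧ 0 < z.2) →
          |(leftmostLowest {v | v ∈ H.Ipow (s : ℝ × ℝ) (k + 1) ∧ 0 < v.2}).2| ≤ |z.2| := by
        rintro z hz (⟨h1, -⟩ | ⟨-, h2⟩)
        · linarith
        · exact hLmin z ⟨hz, h2⟩
      have hwin := hwindow _ hLIp (Or.inr ⟨hL2, fun z hz h2 => hLmin z ⟨hz, h2⟩⟩)
      have hwk := hwalk _ hLIp hLv hminP
      rw [hbd]
      exact ⟨hLIp, hLIp, hwk, hwk, Or.inl ⟨hm, rfl⟩,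
        Or.inr ⟨hL2, fun z hz h2 => hLmin z ⟨hz, h2⟩⟩, hwin, hwin⟩
    · -- no top vertices in I^{k+1}
      have hJmne : {v | v ∈ H.Ipow (s : ℝ × ℝ) (k + 1) ∧ v.2 < 0}.Nonempty :=
        Set.nonempty_iff_ne_empty.mpr hm
      obtain ⟨hLmem, hLmin⟩ := H.leftmostLowest_spec (fun v hv => hsubV hv.1) hJmne
        (Or.inl fun q hq => hq.2)
      have hLIp := hLmem.1
      have hL2 := hLmem.2
      have hLv := hsubV hLIp
      have hminP : ∀ z ∈ H.Ipow (s : ℝ × ℝ) (k + 1),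
          ((leftmostLowest {v | v ∈ H.Ipow (s : ℝ × ℝ) (k + 1) ∧ v.2 < 0}).2 < 0 ∧ z.2 < 0) ∨
          (0 < (leftmostLowest {v | v ∈ H.Ipow (s : ℝ × ℝ) (k + 1) ∧ v.2 < 0}).2 ∧ 0 < z.2) →
          |(leftmostLowest {v | v ∈ H.Ipow (s : ℝ × ℝ) (k + 1) ∧ v.2 < 0}).2| ≤ |z.2| := by
        rintro z hz (⟨-, h2⟩ | ⟨h1, -⟩)
        · exact hLmin z ⟨hz, h2⟩
        · linarith
      have hwin := hwindow _ hLIp (Or.inl ⟨hL2, fun z hz h2 => hLmin z ⟨hz, h2⟩⟩)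
      have hwk := hwalk _ hLIp hLv hminP
      rw [hbd]
      exact ⟨hLIp, hLIp, hwk, hwk,
        Or.inr ⟨hL2, fun z hz h2 => hLmin z ⟨hz, h2⟩⟩, Or.inl ⟨hp, rfl⟩, hwin, hwin⟩
    · -- both sides nonempty
      have hJmne : {v | v ∈ H.Ipow (s : ℝ × ℝ) (k + 1) ∧ v.2 < 0}.Nonempty :=
        Set.nonempty_iff_ne_empty.mpr hm
      have hJpne : {v | v ∈ H.Ipow (s : ℝ × ℝ) (k + 1) ∧ 0 < v.2}.Nonempty :=
        Set.nonempty_iff_ne_empty.mpr hp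
      obtain ⟨hBmem', hBmin'⟩ := H.leftmostLowest_spec (fun v hv => hsubV hv.1) hJmne
        (Or.inl fun q hq => hq.2)
      obtain ⟨hTmem', hTmin'⟩ := H.leftmostLowest_spec (fun v hv => hsubV hv.1) hJpne
        (Or.inr fun q hq => hq.2)
      have hBIp := hBmem'.1
      have hB2 := hBmem'.2
      have hTIp := hTmem'.1
      have hT2 := hTmem'.2
      have hminPB : ∀ z ∈ H.Ipow (s : ℝ × ℝ) (k + 1),
          ((leftmostLowest {v | v ∈ H.Ipow (s : ℝ × ℝ) (k + 1) ∧ v.2 < 0}).2 < 0 ∧ z.2 < 0) ∨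
          (0 < (leftmostLowest {v | v ∈ H.Ipow (s : ℝ × ℝ) (k + 1) ∧ v.2 < 0}).2 ∧ 0 < z.2) →
          |(leftmostLowest {v | v ∈ H.Ipow (s : ℝ × ℝ) (k + 1) ∧ v.2 < 0}).2| ≤ |z.2| := by
        rintro z hz (⟨-, h2⟩ | ⟨h1, -⟩)
        · exact hBmin' z ⟨hz, h2⟩
        · linarith
      have hminPT : ∀ z ∈ H.Ipow (s : ℝ × ℝ) (k + 1),
          ((leftmostLowest {v | v ∈ H.Ipow (s : ℝ × ℝ) (k + 1) ∧ 0 < v.2}).2 < 0 ∧ z.2 < 0) ∨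
          (0 < (leftmostLowest {v | v ∈ H.Ipow (s : ℝ × ℝ) (k + 1) ∧ 0 < v.2}).2 ∧ 0 < z.2) →
          |(leftmostLowest {v | v ∈ H.Ipow (s : ℝ × ℝ) (k + 1) ∧ 0 < v.2}).2| ≤ |z.2| := by
        rintro z hz (⟨h1, -⟩ | ⟨-, h2⟩)
        · linarith
        · exact hTmin' z ⟨hz, h2⟩
      have hwinB := hwindow _ hBIp (Or.inl ⟨hB2, fun z hz h2 => hBmin' z ⟨hz, h2⟩⟩)
      have hwinT := hwindow _ hTIp (Or.inr ⟨hT2, fun z hz h2 => hTmin' z ⟨hz, h2⟩⟩)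
      have hwkB := hwalk _ hBIp (hsubV hBIp) hminPB
      have hwkT := hwalk _ hTIp (hsubV hTIp) hminPT
      rw [hbd]
      exact ⟨hBIp, hTIp, hwkB, hwkT,
        Or.inr ⟨hB2, fun z hz h2 => hBmin' z ⟨hz, h2⟩⟩,
        Or.inr ⟨hT2, fun z hz h2 => hTmin' z ⟨hz, h2⟩⟩, hwinB, hwinT⟩

end DoubleHistogram

namespace DoubleHistogram

variable (H : DoubleHistogram)

lemma Iv_sub_Ipow (s : ↥H.verts) (j : ℕ) {v : ℝ × ℝ} (hv : v ∈ H.Ipow (s : ℝ × ℝ) j) :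
    H.Iv v ⊆ H.Ipow (s : ℝ × ℝ) (j + 1) := by
  have hvv : v ∈ H.verts := H.Ipow_sub_verts s j hv
  have regv := H.verts_sub_region hvv
  obtain ⟨hBm, hTm, hwB, hwT, hIII, hIV, hWB, hWT⟩ := H.master s j
  rcases (H.verts_snd_ne hvv).lt_or_gt with h2 | h2
  · -- v below the base line: use the bottom dominator
    rcases hIII with ⟨hemp, -⟩ | ⟨hB2, hBmin⟩
    · exfalso
      rw [Set.eq_empty_iff_forall_notMem] at hemp
      exact hemp v ⟨hv, h2⟩
    have hBv : (H.bdtd (s : ℝ × ℝ) j).1 ∈ H.verts := by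
      obtain ⟨b, p, hb, -⟩ := hwB
      rw [← hb]; exact b.2
    have regB := H.verts_sub_region hBv
    have hwinv := hWB v hv
    have hBle : v.2 ≤ (H.bdtd (s : ℝ × ℝ) j).1.2 :=
      (abs_le_abs_neg hB2 h2).mp (hBmin v hv h2)
    have hR : H.rhit v ≤ H.rhit (H.bdtd (s : ℝ × ℝ) j).1 := by
      rcases le_total (H.bdtd (s : ℝ × ℝ) j).1.1 (H.rhit v) with hc | hc
      · apply le_csSup (H.RS_bddAbove _)
        refine ⟨hc, ?_⟩
        rintro ⟨t, y⟩ ⟨⟨ht1, ht2⟩, hy⟩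
        have hy' : y = (H.bdtd (s : ℝ × ℝ) j).1.2 := hy
        rw [hy']
        rcases le_total t v.1 with h | h
        · exact H.seg_pt hBv (le_trans (H.lhit_le regB) ht1) (le_trans h hwinv.2)
        · obtain ⟨i, hi1, hi2, hi3⟩ :=
            H.mem_region_bot (H.seg_pt hvv (le_trans (H.lhit_le regv) h) ht2) h2
          exact H.mem_region_of_bot i hi1 hi2 (le_trans hi3 hBle) hB2.le
      · exact le_trans hc (H.le_rhit regB)
    have hL : H.lhit (H.bdtd (s : ℝ × ℝ) j).1 ≤ H.lhit v := by
      rcases le_total (H.lhit v) (H.bdtd (s : ℝ × ℝ) j).1.1 with hc | hc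
      · apply csInf_le (H.LS_bddBelow _)
        refine ⟨hc, ?_⟩
        rintro ⟨t, y⟩ ⟨⟨ht1, ht2⟩, hy⟩
        have hy' : y = (H.bdtd (s : ℝ × ℝ) j).1.2 := hy
        rw [hy']
        rcases le_total v.1 t with h | h
        · exact H.seg_pt hBv (le_trans hwinv.1 h) (le_trans ht2 (H.le_rhit regB))
        · obtain ⟨i, hi1, hi2, hi3⟩ :=
            H.mem_region_bot (H.seg_pt hvv ht1 (le_trans h (H.le_rhit regv))) h2
          exact H.mem_region_of_bot i hi1 hi2 (le_trans hi3 hBle) hB2.le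
      · exact le_trans (H.lhit_le regB) hc
    intro w hw
    obtain ⟨hwv, hw1, hw2⟩ := (H.mem_Iv_iff v w).mp hw
    rw [H.Ipow_succ]
    exact Or.inl ((H.mem_Iv_iff _ w).mpr ⟨hwv, le_trans hL hw1, le_trans hw2 hR⟩)
  · -- v above the base line: use the top dominator
    rcases hIV with ⟨hemp, -⟩ | ⟨hT2, hTmin⟩
    · exfalso
      rw [Set.eq_empty_iff_forall_notMem] at hemp
      exact hemp v ⟨hv, h2⟩
    have hTv : (H.bdtd (s : ℝ × ℝ) j).2 ∈ H.verts := by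
      obtain ⟨b, p, hb, -⟩ := hwT
      rw [← hb]; exact b.2
    have regT := H.verts_sub_region hTv
    have hwinv := hWT v hv
    have hTle : (H.bdtd (s : ℝ × ℝ) j).2.2 ≤ v.2 :=
      (abs_le_abs_pos hT2 h2).mp (hTmin v hv h2)
    have hR : H.rhit v ≤ H.rhit (H.bdtd (s : ℝ × ℝ) j).2 := by
      rcases le_total (H.bdtd (s : ℝ × ℝ) j).2.1 (H.rhit v) with hc | hc
      · apply le_csSup (H.RS_bddAbove _)
        refine ⟨hc, ?_⟩
        rintro ⟨t, y⟩ ⟨⟨ht1, ht2⟩, hy⟩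
        have hy' : y = (H.bdtd (s : ℝ × ℝ) j).2.2 := hy
        rw [hy']
        rcases le_total t v.1 with h | h
        · exact H.seg_pt hTv (le_trans (H.lhit_le regT) ht1) (le_trans h hwinv.2)
        · obtain ⟨i, hi1, hi2, hi3⟩ :=
            H.mem_region_top (H.seg_pt hvv (le_trans (H.lhit_le regv) h) ht2) h2
          exact H.mem_region_of_top i hi1 hi2 hT2.le (le_trans hTle hi3)
      · exact le_trans hc (H.le_rhit regT)
    have hL : H.lhit (H.bdtd (s : ℝ × ℝ) j).2 ≤ H.lhit v := by
      rcases le_total (H.lhit v) (H.bdtd (s : ℝ × ℝ) j).2.1 with hc | hc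
      · apply csInf_le (H.LS_bddBelow _)
        refine ⟨hc, ?_⟩
        rintro ⟨t, y⟩ ⟨⟨ht1, ht2⟩, hy⟩
        have hy' : y = (H.bdtd (s : ℝ × ℝ) j).2.2 := hy
        rw [hy']
        rcases le_total v.1 t with h | h
        · exact H.seg_pt hTv (le_trans hwinv.1 h) (le_trans ht2 (H.le_rhit regT))
        · obtain ⟨i, hi1, hi2, hi3⟩ :=
            H.mem_region_top (H.seg_pt hvv ht1 (le_trans h (H.le_rhit regv))) h2
          exact H.mem_region_of_top i hi1 hi2 hT2.le (le_trans hTle hi3)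
      · exact le_trans (H.lhit_le regT) hc
    intro w hw
    obtain ⟨hwv, hw1, hw2⟩ := (H.mem_Iv_iff v w).mp hw
    rw [H.Ipow_succ]
    exact Or.inr ((H.mem_Iv_iff _ w).mpr ⟨hwv, le_trans hL hw1, le_trans hw2 hR⟩)

lemma s_mem_Ipow (s : ↥H.verts) : ∀ j : ℕ, (s : ℝ × ℝ) ∈ H.Ipow (s : ℝ × ℝ) j := by
  intro j
  induction j with
  | zero => exact rfl
  | succ j IH => exact H.Iv_sub_Ipow s j IH (H.mem_Iv_self s.2)

lemma walk_mem_Ipow (s : ↥H.verts) : ∀ (j : ℕ) (w : ↥H.verts)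
    (q : H.visGraph.Walk w s), q.length ≤ j → (w : ℝ × ℝ) ∈ H.Ipow (s : ℝ × ℝ) j := by
  intro j
  induction j with
  | zero =>
    intro w q hq
    cases q with
    | nil => exact rfl
    | cons h r => exfalso; simp [SimpleGraph.Walk.length_cons] at hq
  | succ j IHj =>
    intro w q hq
    cases q with
    | nil => exact H.s_mem_Ipow s (j + 1)
    | cons h r =>
      rename_i u
      have hu := IHj u r (by simp only [SimpleGraph.Walk.length_cons] at hq; omega)
      have hcov : H.covisible (u : ℝ × ℝ) (w : ℝ × ℝ) := (h.symm).2
      exact H.Iv_sub_Ipow s j hu (H.mem_Iv_of_covisible u.2 w.2 hcov)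

lemma blocker {v : ℝ × ℝ} (hv : v ∈ H.verts) (hne : H.Iv v ≠ H.verts) :
    ∃ b ∈ H.Iv v, ((v.2 < 0 ∧ b.2 < 0) ∨ (0 < v.2 ∧ 0 < b.2)) ∧ |b.2| < |v.2| := by
  have hreg := H.verts_sub_region hv
  have hIvV : ¬(H.lhit v = H.xs 0 ∧ H.rhit v = H.xs (Fin.last H.m)) := by
    rintro ⟨h1, h2⟩
    apply hne
    apply Set.Subset.antisymm (H.Iv_sub_verts v)
    intro z hz
    refine (H.mem_Iv_iff v z).mpr ⟨hz, ?_, ?_⟩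
    · rw [h1]; exact (H.mem_region_x (H.verts_sub_region hz)).1
    · rw [h2]; exact (H.mem_region_x (H.verts_sub_region hz)).2
  rcases (H.verts_snd_ne hv).lt_or_gt with h2 | h2
  · by_cases hL : H.lhit v = H.xs 0
    · have hRne : H.rhit v ≠ H.xs (Fin.last H.m) := fun hc => hIvV ⟨hL, hc⟩
      obtain ⟨i, heq, hle, hseg, hblk⟩ := H.rhit_spec_bot hv h2
      have hine : i ≠ Fin.last H.m := fun hc => hRne (by rw [heq, hc])
      have hlt : (i : ℕ) < H.m := by
        have := Fin.lt_last_iff_ne_last.mpr hine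
        exact Fin.lt_def.mp this
      have hkk : (⟨(i : ℕ), hlt⟩ : Fin H.m).castSucc = i := by
        apply Fin.ext; simp
      have hd := hblk ⟨(i : ℕ), hlt⟩ hkk
      refine ⟨(H.xs i, H.d ⟨(i : ℕ), hlt⟩), ?_, Or.inl ⟨h2, H.d_neg _⟩, ?_⟩
      · refine (H.mem_Iv_iff _ _).mpr ⟨?_, ?_, ?_⟩
        · have := H.vert_bl ⟨(i : ℕ), hlt⟩
          rw [hkk] at this
          exact this
        · exact le_trans (H.lhit_le hreg) (le_trans (H.le_rhit hreg) (le_of_eq heq))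
        · exact le_of_eq heq.symm
      · have hdn := H.d_neg (⟨(i : ℕ), hlt⟩ : Fin H.m)
        rw [abs_of_neg hdn, abs_of_neg h2]
        linarith
    · obtain ⟨i, heq, hle, hseg, hblk⟩ := H.lhit_spec_bot hv h2
      have hi0 : i ≠ 0 := fun hc => hL (by rw [heq, hc])
      have hpos : 0 < (i : ℕ) := Fin.pos_of_ne_zero hi0
      have hlt : (i : ℕ) - 1 < H.m := by have := i.isLt; omega
      have hkk : (⟨(i : ℕ) - 1, hlt⟩ : Fin H.m).succ = i := by
        apply Fin.ext; simp; omega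
      have hd := hblk ⟨(i : ℕ) - 1, hlt⟩ hkk
      refine ⟨(H.xs i, H.d ⟨(i : ℕ) - 1, hlt⟩), ?_, Or.inl ⟨h2, H.d_neg _⟩, ?_⟩
      · refine (H.mem_Iv_iff _ _).mpr ⟨?_, ?_, ?_⟩
        · have := H.vert_br ⟨(i : ℕ) - 1, hlt⟩
          rw [hkk] at this
          exact this
        · exact le_of_eq heq
        · exact le_trans (le_of_eq heq.symm) (le_trans (H.lhit_le hreg) (H.le_rhit hreg))
      · have hdn := H.d_neg (⟨(i : ℕ) - 1, hlt⟩ : Fin H.m)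
        rw [abs_of_neg hdn, abs_of_neg h2]
        linarith
  · by_cases hL : H.lhit v = H.xs 0
    · have hRne : H.rhit v ≠ H.xs (Fin.last H.m) := fun hc => hIvV ⟨hL, hc⟩
      obtain ⟨i, heq, hle, hseg, hblk⟩ := H.rhit_spec_top hv h2
      have hine : i ≠ Fin.last H.n := by
        intro hc
        apply hRne
        rw [heq, hc, H.right_eq]
      have hlt : (i : ℕ) < H.n := by
        have := Fin.lt_last_iff_ne_last.mpr hine
        exact Fin.lt_def.mp this
      have hkk : (⟨(i : ℕ), hlt⟩ : Fin H.n).castSucc = i := by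
        apply Fin.ext; simp
      have hd := hblk ⟨(i : ℕ), hlt⟩ hkk
      refine ⟨(H.ys i, H.h ⟨(i : ℕ), hlt⟩), ?_, Or.inr ⟨h2, H.h_pos _⟩, ?_⟩
      · refine (H.mem_Iv_iff _ _).mpr ⟨?_, ?_, ?_⟩
        · have := H.vert_tl ⟨(i : ℕ), hlt⟩
          rw [hkk] at this
          exact this
        · exact le_trans (H.lhit_le hreg) (le_trans (H.le_rhit hreg) (le_of_eq heq))
        · exact le_of_eq heq.symm
      · have hdn := H.h_pos (⟨(i : ℕ), hlt⟩ : Fin H.n)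
        rw [abs_of_pos hdn, abs_of_pos h2]
        linarith
    · obtain ⟨i, heq, hle, hseg, hblk⟩ := H.lhit_spec_top hv h2
      have hi0 : i ≠ 0 := by
        intro hc
        apply hL
        rw [heq, hc, H.left_eq]
      have hpos : 0 < (i : ℕ) := Fin.pos_of_ne_zero hi0
      have hlt : (i : ℕ) - 1 < H.n := by have := i.isLt; omega
      have hkk : (⟨(i : ℕ) - 1, hlt⟩ : Fin H.n).succ = i := by
        apply Fin.ext; simp; omega
      have hd := hblk ⟨(i : ℕ) - 1, hlt⟩ hkk
      refine ⟨(H.ys i, H.h ⟨(i : ℕ) - 1, hlt⟩), ?_, Or.inr ⟨h2, H.h_pos _⟩, ?_⟩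
      · refine (H.mem_Iv_iff _ _).mpr ⟨?_, ?_, ?_⟩
        · have := H.vert_tr ⟨(i : ℕ) - 1, hlt⟩
          rw [hkk] at this
          exact this
        · exact le_of_eq heq
        · exact le_trans (le_of_eq heq.symm) (le_trans (H.lhit_le hreg) (H.le_rhit hreg))
      · have hdn := H.h_pos (⟨(i : ℕ) - 1, hlt⟩ : Fin H.n)
        rw [abs_of_pos hdn, abs_of_pos h2]
        linarith

end DoubleHistogram

namespace DoubleHistogram

variable (H : DoubleHistogram)

lemma final_bot (s : ↥H.verts) (j : ℕ) (hne : H.Iv (H.bdtd (s : ℝ × ℝ) j).1 ≠ H.verts)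
    (w : ↥H.verts) (hw : (w : ℝ × ℝ) = (H.bdtd (s : ℝ × ℝ) (j + 1)).1) :
    H.visGraph.dist s w = j + 1 := by
  obtain ⟨hBm, hTm, hwB, hwT, hIII, hIV, hWB, hWT⟩ := H.master s j
  obtain ⟨hBm', hTm', hwB', hwT', hIII', hIV', hWB', hWT'⟩ := H.master s (j + 1)
  have hBv : (H.bdtd (s : ℝ × ℝ) j).1 ∈ H.verts := by
    obtain ⟨b, p, hb, -⟩ := hwB
    rw [← hb]; exact b.2
  obtain ⟨b, p, hb, hl⟩ := hwB'
  have hwb : w = b := Subtype.ext (by rw [hw, hb])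
  have hub : H.visGraph.dist s w ≤ j + 1 := by
    rw [hwb]; exact le_trans (SimpleGraph.dist_le p) hl
  obtain ⟨b', hb'Iv, hsgn, hblt⟩ := H.blocker hBv hne
  have hb'Ip : b' ∈ H.Ipow (s : ℝ × ℝ) (j + 1) := by
    rw [H.Ipow_succ]; exact Or.inl hb'Iv
  have hnotin : (H.bdtd (s : ℝ × ℝ) (j + 1)).1 ∉ H.Ipow (s : ℝ × ℝ) j := by
    intro hin
    rcases hsgn with ⟨hv2, hb2⟩ | ⟨hv2, hb2⟩
    · rcases hIII' with ⟨hemp, -⟩ | ⟨hB2', hmin'⟩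
      · rw [Set.eq_empty_iff_forall_notMem] at hemp
        exact hemp b' ⟨hb'Ip, hb2⟩
      rcases hIII with ⟨hemp, -⟩ | ⟨hB2, hmin⟩
      · rw [Set.eq_empty_iff_forall_notMem] at hemp
        exact hemp _ ⟨hin, hB2'⟩
      · have h1 := hmin _ hin hB2'
        have h2 := hmin' b' hb'Ip hb2
        linarith
    · rcases hIII with ⟨hempj, hBTj⟩ | ⟨hB2, -⟩
      swap
      · linarith
      rcases hIII' with ⟨-, hBT'⟩ | ⟨hB2', -⟩
      swap
      · rw [Set.eq_empty_iff_forall_notMem] at hempj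
        exact hempj _ ⟨hin, hB2'⟩
      rcases hIV' with ⟨hemp', -⟩ | ⟨hT2', hminT'⟩
      · rw [Set.eq_empty_iff_forall_notMem] at hemp'
        exact hemp' b' ⟨hb'Ip, hb2⟩
      rcases hIV with ⟨hempj', -⟩ | ⟨hT2, hminT⟩
      · rw [Set.eq_empty_iff_forall_notMem] at hempj'
        refine hempj' (H.bdtd (s : ℝ × ℝ) (j + 1)).1 ⟨hin, ?_⟩
        rw [hBT']; exact hT2'
      · have h1 := hminT _ hin (by rw [hBT']; exact hT2')
        have h2 := hminT' b' hb'Ip hb2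
        rw [hBTj] at hblt
        rw [hBT'] at h1
        linarith
  have hlb : ¬ H.visGraph.dist s w ≤ j := by
    intro hd
    have hreach : H.visGraph.Reachable s w := by rw [hwb]; exact ⟨p⟩
    obtain ⟨q, hq⟩ := hreach.exists_walk_length_eq_dist
    have hmem := H.walk_mem_Ipow s j w q.reverse
      (by rw [SimpleGraph.Walk.length_reverse, hq]; exact hd)
    rw [hw] at hmem
    exact hnotin hmem
  omega

lemma final_top (s : ↥H.verts) (j : ℕ) (hne : H.Iv (H.bdtd (s : ℝ × ℝ) j).2 ≠ H.verts)
    (w : ↥H.verts) (hw : (w : ℝ × ℝ) = (H.bdtd (s : ℝ × ℝ) (j + 1)).2) :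
    H.visGraph.dist s w = j + 1 := by
  obtain ⟨hBm, hTm, hwB, hwT, hIII, hIV, hWB, hWT⟩ := H.master s j
  obtain ⟨hBm', hTm', hwB', hwT', hIII', hIV', hWB', hWT'⟩ := H.master s (j + 1)
  have hTv : (H.bdtd (s : ℝ × ℝ) j).2 ∈ H.verts := by
    obtain ⟨b, p, hb, -⟩ := hwT
    rw [← hb]; exact b.2
  obtain ⟨b, p, hb, hl⟩ := hwT'
  have hwb : w = b := Subtype.ext (by rw [hw, hb])
  have hub : H.visGraph.dist s w ≤ j + 1 := by
    rw [hwb]; exact le_trans (SimpleGraph.dist_le p) hl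
  obtain ⟨b', hb'Iv, hsgn, hblt⟩ := H.blocker hTv hne
  have hb'Ip : b' ∈ H.Ipow (s : ℝ × ℝ) (j + 1) := by
    rw [H.Ipow_succ]; exact Or.inr hb'Iv
  have hnotin : (H.bdtd (s : ℝ × ℝ) (j + 1)).2 ∉ H.Ipow (s : ℝ × ℝ) j := by
    intro hin
    rcases hsgn with ⟨hv2, hb2⟩ | ⟨hv2, hb2⟩
    · -- T_j below the base line (degenerate case), b' below
      rcases hIV with ⟨hempj, hTBj⟩ | ⟨hT2, -⟩
      swap
      · linarith
      rcases hIV' with ⟨-, hTB'⟩ | ⟨hT2', -⟩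
      swap
      · rw [Set.eq_empty_iff_forall_notMem] at hempj
        exact hempj _ ⟨hin, hT2'⟩
      rcases hIII' with ⟨hemp', -⟩ | ⟨hB2', hminB'⟩
      · rw [Set.eq_empty_iff_forall_notMem] at hemp'
        exact hemp' b' ⟨hb'Ip, hb2⟩
      rcases hIII with ⟨hempj', -⟩ | ⟨hB2, hminB⟩
      · rw [Set.eq_empty_iff_forall_notMem] at hempj'
        refine hempj' (H.bdtd (s : ℝ × ℝ) (j + 1)).2 ⟨hin, ?_⟩
        rw [hTB']; exact hB2'
      · have h1 := hminB _ hin (by rw [hTB']; exact hB2')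
        have h2 := hminB' b' hb'Ip hb2
        rw [hTBj] at hblt
        rw [hTB'] at h1
        linarith
    · -- T_j above, b' above
      rcases hIV' with ⟨hemp, -⟩ | ⟨hT2', hmin'⟩
      · rw [Set.eq_empty_iff_forall_notMem] at hemp
        exact hemp b' ⟨hb'Ip, hb2⟩
      rcases hIV with ⟨hemp, -⟩ | ⟨hT2, hmin⟩
      · rw [Set.eq_empty_iff_forall_notMem] at hemp
        exact hemp _ ⟨hin, hT2'⟩
      · have h1 := hmin _ hin hT2'
        have h2 := hmin' b' hb'Ip hb2
        linarith
  have hlb : ¬ H.visGraph.dist s w ≤ j := by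
    intro hd
    have hreach : H.visGraph.Reachable s w := by rw [hwb]; exact ⟨p⟩
    obtain ⟨q, hq⟩ := hreach.exists_walk_length_eq_dist
    have hmem := H.walk_mem_Ipow s j w q.reverse
      (by rw [SimpleGraph.Walk.length_reverse, hq]; exact hd)
    rw [hw] at hmem
    exact hnotin hmem
  omega

end DoubleHistogram

/-- In a double histogram, for `k ≥ 1`: if `I(bd^{k−1}(s)) ≠ V(P)` then
`d(s, bd^k(s)) = k`, and if `I(td^{k−1}(s)) ≠ V(P)` then `d(s, td^k(s)) = k`. -/
theorem dominators_have_distance_k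
    (H : DoubleHistogram) (k : ℕ) (hk : 1 ≤ k) (s : ↥H.verts) :
    (H.Iv (H.bdtd (s : ℝ × ℝ) (k - 1)).1 ≠ H.verts →
      ∀ w : ↥H.verts, (w : ℝ × ℝ) = (H.bdtd (s : ℝ × ℝ) k).1 →
        H.visGraph.dist s w = k) ∧
    (H.Iv (H.bdtd (s : ℝ × ℝ) (k - 1)).2 ≠ H.verts →
      ∀ w : ↥H.verts, (w : ℝ × ℝ) = (H.bdtd (s : ℝ × ℝ) k).2 →
        H.visGraph.dist s w = k) := by
  obtain ⟨j, rfl⟩ : ∃ j, k = j + 1 := ⟨k - 1, by omega⟩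
  simp only [Nat.add_sub_cancel]
  exact ⟨fun hne w hw => H.final_bot s j hne w hw,
    fun hne w hw => H.final_top s j hne w hw⟩
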